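/- arXiv:2412.18392 — 3 statements merged into one kernel-verified Lean document; each statement's English description precedes it below -/
import Mathlib

section
/- Let (X,d,μ) be an RD-space with parameters κ≤n and μ(X)=∞, and let K be a strongly singular generalized kernel on X with parameters (m,ε,α,p₀). Then there exists C>0 such that for all z,z₀∈X with d(z,z₀)≥1, every x∈X with d(x,z₀) ≤ 2d(z,z₀), and all f₁,…,f_m∈L^{p₀'}_{loc}(X), ∫_{{ȳ∈X^m : ρ(ȳ,z̄₀) ≥ 2d(z,z₀)}} |K(z,y₁,…,y_m) − K(z₀,y₁,…,y_m)| ∏_{j=1}^m |f_j(y_j)| dμ(y₁)⋯dμ(y_m) ≤ C·d(z,z₀)^{ε−ε/α}·𝓜_{p₀'}(f⃗)(x), where z̄₀=(z₀,…,z₀) and ρ(ȳ,z̄₀)=max_{1≤j≤m} d(y_j,z₀). -/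
open MeasureTheory Metric ENNReal Set Bornology
open scoped BigOperators NNReal ENNReal

noncomputable section

section Defs

variable {X : Type*} [MetricSpace X] [MeasurableSpace X] [BorelSpace X]

/-- Weighted `L^p` norm `(∫ |f|^p w dμ)^{1/p}` of a real-valued function. -/
def lpNormW (μ : Measure X) (p : ℝ) (w : X → ℝ) (f : X → ℝ) : ℝ≥0∞ :=
  (∫⁻ x, ENNReal.ofReal (|f x| ^ p * w x) ∂μ) ^ (1 / p)

/-- Weighted `L^p` norm of an `ℝ≥0∞`-valued function. -/
def lpNormW' (μ : Measure X) (p : ℝ) (w : X → ℝ) (g : X → ℝ≥0∞) : ℝ≥0∞ :=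
  (∫⁻ x, g x ^ p * ENNReal.ofReal (w x) ∂μ) ^ (1 / p)

/-- Weighted weak `L^p` (Lorentz `L^{p,∞}`) norm of a real-valued function. -/
def weakLpNormW (μ : Measure X) (p : ℝ) (w : X → ℝ) (f : X → ℝ) : ℝ≥0∞ :=
  ⨆ (t : ℝ) (_ : 0 < t),
    ENNReal.ofReal t * (∫⁻ x in {y | t < |f y|}, ENNReal.ofReal (w x) ∂μ) ^ (1 / p)

/-- Weighted weak `L^p` norm of an `ℝ≥0∞`-valued function. -/
def weakLpNormW' (μ : Measure X) (p : ℝ) (w : X → ℝ) (g : X → ℝ≥0∞) : ℝ≥0∞ :=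
  ⨆ (t : ℝ) (_ : 0 < t),
    ENNReal.ofReal t * (∫⁻ x in {y | ENNReal.ofReal t < g y}, ENNReal.ofReal (w x) ∂μ) ^ (1 / p)

/-- The BMO seminorm `sup_B μ(B)⁻¹ ∫_B |f - f_B| dμ` (supremum over balls). -/
def bmoNorm (μ : Measure X) (f : X → ℝ) : ℝ≥0∞ :=
  ⨆ (c : X) (r : ℝ) (_ : 0 < r),
    (μ (ball c r))⁻¹ *
      ∫⁻ y in ball c r, ENNReal.ofReal |f y - ⨍ z in ball c r, f z ∂μ| ∂μ

/-- Membership in `BMO(X)`. -/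
def MemBMO (μ : Measure X) (f : X → ℝ) : Prop :=
  LocallyIntegrable f μ ∧ bmoNorm μ f < ⊤

/-- The Hardy–Littlewood maximal function. -/
def hlMaximal (μ : Measure X) (f : X → ℝ) (x : X) : ℝ≥0∞ :=
  ⨆ (c : X) (r : ℝ) (_ : 0 < r) (_ : x ∈ ball c r),
    (μ (ball c r))⁻¹ * ∫⁻ y in ball c r, ENNReal.ofReal |f y| ∂μ

/-- The sharp maximal function `M^♯ f`. -/
def sharpMaximal (μ : Measure X) (f : X → ℝ) (x : X) : ℝ≥0∞ :=
  ⨆ (c : X) (r : ℝ) (_ : 0 < r) (_ : x ∈ ball c r),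
    (μ (ball c r))⁻¹ *
      ∫⁻ y in ball c r, ENNReal.ofReal |f y - ⨍ z in ball c r, f z ∂μ| ∂μ

/-- `M_δ^♯ f = (M^♯(|f|^δ))^{1/δ}`. -/
def sharpMaximalPow (μ : Measure X) (δ : ℝ) (f : X → ℝ) (x : X) : ℝ≥0∞ :=
  (sharpMaximal μ (fun y => |f y| ^ δ) x) ^ (1 / δ)

/-- The multilinear maximal operator `𝓜(f⃗)`. -/
def multiMaximal (μ : Measure X) {m : ℕ} (f : Fin m → X → ℝ) (x : X) : ℝ≥0∞ :=
  ⨆ (c : X) (r : ℝ) (_ : 0 < r) (_ : x ∈ ball c r),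
    ∏ j, ((μ (ball c r))⁻¹ * ∫⁻ y in ball c r, ENNReal.ofReal |f j y| ∂μ)

/-- `𝓜_s(f⃗) = (𝓜(|f₁|^s,…,|f_m|^s))^{1/s}`. -/
def multiMaximalPow (μ : Measure X) {m : ℕ} (s : ℝ) (f : Fin m → X → ℝ) (x : X) : ℝ≥0∞ :=
  (multiMaximal μ (fun j y => |f j y| ^ s) x) ^ (1 / s)

/-- The Muckenhoupt `A₁` condition on a metric measure space. -/
def MemA1 (μ : Measure X) (w : X → ℝ) : Prop :=
  (∀ x, 0 ≤ w x) ∧ LocallyIntegrable w μ ∧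
  ∃ C : ℝ, 0 < C ∧ ∀ (c : X) (r : ℝ), 0 < r →
    (μ (ball c r))⁻¹ * (∫⁻ y in ball c r, ENNReal.ofReal (w y) ∂μ) ≤
      ENNReal.ofReal C * essInf (fun y => ENNReal.ofReal (w y)) (μ.restrict (ball c r))

/-- The Muckenhoupt `A_p` condition, `1 < p < ∞`, on a metric measure space. -/
def MemAp (μ : Measure X) (p : ℝ) (w : X → ℝ) : Prop :=
  (∀ x, 0 ≤ w x) ∧ LocallyIntegrable w μ ∧
  ∃ C : ℝ, 0 < C ∧ ∀ (c : X) (r : ℝ), 0 < r →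
    ((μ (ball c r))⁻¹ * ∫⁻ y in ball c r, ENNReal.ofReal (w y) ∂μ) *
      ((μ (ball c r))⁻¹ *
        ∫⁻ y in ball c r, ENNReal.ofReal (w y ^ (-(1 / (p - 1)))) ∂μ) ^ (p - 1) ≤
      ENNReal.ofReal C

/-- `A_∞ = ⋃_{p ≥ 1} A_p`. -/
def MemAinf (μ : Measure X) (w : X → ℝ) : Prop :=
  MemA1 μ w ∨ ∃ p : ℝ, 1 < p ∧ MemAp μ p w

/-- The `j`-th factor in the multilinear `A_{p⃗}` condition over a ball `B`:
`((μ B)⁻¹ ∫_B w^{1-p'} dμ)^{1/p'}`, read as `(ess inf_B w)⁻¹` when `p = 1`. -/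
def apFactor (μ : Measure X) (pj : ℝ) (wj : X → ℝ) (B : Set X) : ℝ≥0∞ :=
  if pj = 1 then (essInf (fun y => ENNReal.ofReal (wj y)) (μ.restrict B))⁻¹
  else ((μ B)⁻¹ * ∫⁻ y in B, ENNReal.ofReal (wj y ^ (-(1 / (pj - 1)))) ∂μ) ^ (1 - 1 / pj)

/-- The multiple-weight condition `A_{p⃗}` of Lerner–Grafakos type on a metric
measure space, where `1/p = ∑ 1/p_j` and `ν_{w⃗} = ∏ w_j^{p/p_j}`. -/
def MemAVec (μ : Measure X) {m : ℕ} (p : Fin m → ℝ) (w : Fin m → X → ℝ) : Prop :=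
  (∀ j x, 0 ≤ w j x) ∧ (∀ j, LocallyIntegrable (w j) μ) ∧
  ∃ C : ℝ, 0 < C ∧ ∀ (c : X) (r : ℝ), 0 < r →
    ((μ (ball c r))⁻¹ *
        ∫⁻ y in ball c r,
          ENNReal.ofReal (∏ j, w j y ^ ((∑ i, 1 / p i)⁻¹ / p j)) ∂μ) ^ (∑ i, 1 / p i) *
      ∏ j, apFactor μ (p j) (w j) (ball c r) ≤ ENNReal.ofReal C

/-- Generalized weighted Morrey norm `sup_B (φ(w(B))⁻¹ ∫_B |f|^p w dμ)^{1/p}`. -/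
def morreyNormW (μ : Measure X) (p : ℝ) (φ : ℝ → ℝ) (w : X → ℝ) (f : X → ℝ) : ℝ≥0∞ :=
  ⨆ (c : X) (r : ℝ) (_ : 0 < r),
    ((ENNReal.ofReal
        (φ (∫⁻ y in ball c r, ENNReal.ofReal (w y) ∂μ).toReal))⁻¹ *
      ∫⁻ y in ball c r, ENNReal.ofReal (|f y| ^ p * w y) ∂μ) ^ (1 / p)

/-- Generalized weighted Morrey norm of an `ℝ≥0∞`-valued function. -/
def morreyNormW' (μ : Measure X) (p : ℝ) (φ : ℝ → ℝ) (w : X → ℝ) (g : X → ℝ≥0∞) : ℝ≥0∞ :=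
  ⨆ (c : X) (r : ℝ) (_ : 0 < r),
    ((ENNReal.ofReal
        (φ (∫⁻ y in ball c r, ENNReal.ofReal (w y) ∂μ).toReal))⁻¹ *
      ∫⁻ y in ball c r, g y ^ p * ENNReal.ofReal (w y) ∂μ) ^ (1 / p)

/-- An RD-space: a space of homogeneous type whose (regular Borel) measure is
doubling (with upper dimension `n = log₂ C₁`) and reverse doubling with exponent
`κ ≤ n`; we also assume `μ(X) = ∞` throughout (which, together with the
finiteness of the measure of balls, forces `diam X = ∞`, so the reverse doubling
condition is stated for all radii and all `λ ≥ 1`). -/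
structure IsRDSpace (μ : Measure X) (κ n : ℝ) : Prop where
  regular : μ.Regular
  ball_pos : ∀ (x : X) (r : ℝ), 0 < r → 0 < μ (ball x r)
  ball_lt_top : ∀ (x : X) (r : ℝ), 0 < r → μ (ball x r) < ⊤
  kappa_pos : 0 < κ
  kappa_le_n : κ ≤ n
  doubling : ∃ C₁ : ℝ, 1 ≤ C₁ ∧ n = Real.logb 2 C₁ ∧
    ∀ (x : X) (r : ℝ), 0 < r → μ (ball x (2 * r)) ≤ ENNReal.ofReal C₁ * μ (ball x r)
  reverse_doubling : ∃ C₂ : ℝ, 0 < C₂ ∧ C₂ ≤ 1 ∧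
    ∀ (x : X) (r lam : ℝ), 0 < r → 1 ≤ lam →
      ENNReal.ofReal (C₂ * lam ^ κ) * μ (ball x r) ≤ μ (ball x (lam * r))
  measure_univ_eq_top : μ Set.univ = ⊤

/-- There is a positive nondecreasing function `Φ` on `[0,∞)` with
`μ(B(x,r)) ≍ Φ(r)` uniformly in `x` and `r > 0`. -/
def HasMeasureFunction (μ : Measure X) : Prop :=
  ∃ Φ : ℝ → ℝ, (∀ r : ℝ, 0 < r → 0 < Φ r) ∧ MonotoneOn Φ (Set.Ici (0 : ℝ)) ∧
    ∃ c₁ c₂ : ℝ, 0 < c₁ ∧ 0 < c₂ ∧ ∀ (x : X) (r : ℝ), 0 < r →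
      ENNReal.ofReal (c₁ * Φ r) ≤ μ (ball x r) ∧ μ (ball x r) ≤ ENNReal.ofReal (c₂ * Φ r)

/-- `ρ(ȳ, x̄) = max_{1 ≤ j ≤ m} d(y_j, x)`. -/
def rho {m : ℕ} (x : X) (y : Fin m → X) : ℝ := ⨆ j, dist (y j) x

/-- A strongly singular generalized kernel on an RD-space with parameters
`(m, ε, α, p₀)` (`p₀'` the conjugate exponent of `p₀`, RD-parameters `κ ≤ n`). -/
def IsSSGKernel (μ : Measure X) (m : ℕ) (κ n ε α p₀ p₀' : ℝ)
    (K : X → (Fin m → X) → ℝ) : Prop :=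
  LocallyIntegrableOn (fun z : X × (Fin m → X) => K z.1 z.2)
    {z : X × (Fin m → X) | ¬ ∀ j, z.2 j = z.1} (μ.prod (Measure.pi fun _ : Fin m => μ)) ∧
  ∃ C_K : ℝ, 0 < C_K ∧ ∀ x x' : X, x ≠ x' → ∀ k : ℕ, 1 ≤ k →
    (∫⁻ y in {y : Fin m → X |
        2 ^ k * dist x x' ^ (if 1 ≤ dist x x' then (1 : ℝ) else α) ≤ rho x y ∧
        rho x y ≤ 2 ^ (k + 1) * dist x x' ^ (if 1 ≤ dist x x' then (1 : ℝ) else α)},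
      ENNReal.ofReal (|K x y - K x' y| ^ p₀) ∂(Measure.pi fun _ : Fin m => μ)) ^ (1 / p₀)
    ≤ ENNReal.ofReal (C_K *
        dist x x' ^ (ε - (if 1 ≤ dist x x' then (1 : ℝ) else α) *
          ((if 1 ≤ dist x x' then n else κ) * m / p₀' + ε / α)) *
        2 ^ (-(k : ℝ) * (n * m / p₀' + ε / α)))

/-- An `m`-linear strongly singular integral operator with generalized kernel
(`m`-GSSIO) on an RD-space. -/
structure IsGSSIO (μ : Measure X) (m : ℕ) (κ n ε α p₀ p₀' q : ℝ)
    (r l : Fin m → ℝ) (T : (Fin m → X → ℝ) → X → ℝ) : Prop where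
  m_pos : 0 < m
  eps_pos : 0 < ε
  alpha_pos : 0 < α
  alpha_le_one : α ≤ 1
  p0_gt_one : 1 < p₀
  p0_conj : 1 / p₀ + 1 / p₀' = 1
  kernel : ∃ K : X → (Fin m → X) → ℝ, IsSSGKernel μ m κ n ε α p₀ p₀' K ∧
    ∀ f : Fin m → X → ℝ,
      (∀ j, ∃ L : ℝ≥0, LipschitzWith L (f j)) →
      (∀ j, IsBounded (tsupport (f j))) →
      ∀ x, x ∉ ⋂ j, tsupport (f j) →
        T f x = ∫ y : Fin m → X, K x y * ∏ j, f j (y j) ∂(Measure.pi fun _ : Fin m => μ)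
  r_ge_one : ∀ j, 1 ≤ r j
  weak_r : ∃ C : ℝ, 0 < C ∧ ∀ f : Fin m → X → ℝ, (∀ j, Measurable (f j)) →
    weakLpNormW μ (∑ j, 1 / r j)⁻¹ (fun _ => 1) (T f) ≤
      ENNReal.ofReal C * ∏ j, lpNormW μ (r j) (fun _ => 1) (f j)
  l_ge_one : ∀ j, 1 ≤ l j
  lq_pos : 0 < (∑ j, 1 / l j)⁻¹ / q
  lq_le : (∑ j, 1 / l j)⁻¹ / q ≤ α * κ / n
  weak_l : ∃ C : ℝ, 0 < C ∧ ∀ f : Fin m → X → ℝ, (∀ j, Measurable (f j)) →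
    weakLpNormW μ q (fun _ => 1) (T f) ≤
      ENNReal.ofReal C * ∏ j, lpNormW μ (l j) (fun _ => 1) (f j)

end Defs


section AuxLemmas

lemma lintegral_pi_prod' {X : Type*} [MeasurableSpace X] (μ : Measure X) [SigmaFinite μ] :
    ∀ (m : ℕ) (g : Fin m → X → ℝ≥0∞), (∀ j, Measurable (g j)) →
    ∫⁻ y : Fin m → X, ∏ j, g j (y j) ∂(Measure.pi fun _ => μ) = ∏ j, ∫⁻ t, g j t ∂μ := by
  intro m
  induction m with
  | zero => intro g hg; simp [Measure.pi_empty_univ]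
  | succ m ih =>
    intro g hg
    have h0 := measurePreserving_piFinSuccAbove (fun _ : Fin (m + 1) => μ) 0
    have hmeas : Measurable fun z : X × (Fin m → X) =>
        g 0 z.1 * ∏ j : Fin m, g j.succ (z.2 j) :=
      ((hg 0).comp measurable_fst).mul <|
        (Finset.measurable_prod _ fun j _ =>
          (hg j.succ).comp ((measurable_pi_apply j).comp measurable_snd))
    calc ∫⁻ y : Fin (m + 1) → X, ∏ j, g j (y j) ∂(Measure.pi fun _ => μ)
        = ∫⁻ y : Fin (m + 1) → X,
            (fun z : X × (Fin m → X) => g 0 z.1 * ∏ j : Fin m, g j.succ (z.2 j))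
              ((MeasurableEquiv.piFinSuccAbove (fun _ => X) 0) y)
              ∂(Measure.pi fun _ => μ) := by
          refine lintegral_congr fun y => ?_
          simp [MeasurableEquiv.piFinSuccAbove, Fin.prod_univ_succ, Fin.zero_succAbove, Fin.tail]
      _ = ∫⁻ z : X × (Fin m → X), g 0 z.1 * ∏ j : Fin m, g j.succ (z.2 j)
            ∂(μ.prod (Measure.pi fun _ => μ)) := h0.lintegral_comp hmeas
      _ = (∫⁻ t, g 0 t ∂μ) * ∫⁻ v : Fin m → X, ∏ j : Fin m, g j.succ (v j)
            ∂(Measure.pi fun _ => μ) :=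
          lintegral_prod_mul (hg 0).aemeasurable
            ((Finset.measurable_prod (Finset.univ) (fun j _ =>
              ((hg j.succ).comp (measurable_pi_apply j) :
                Measurable fun v : Fin m → X => g j.succ (v j)))).aemeasurable)
      _ = ∏ j, ∫⁻ t, g j t ∂μ := by
          rw [ih _ fun j => hg j.succ, Fin.prod_univ_succ]

lemma sigmaFinite_of_balls' {X : Type*} [MetricSpace X] [MeasurableSpace X]
    (μ : Measure X) (x₀ : X) (h : ∀ r : ℝ, 0 < r → μ (ball x₀ r) < ⊤) :
    SigmaFinite μ := by
  refine ⟨⟨⟨fun n => ball x₀ (n + 1), fun _ => trivial, fun n => h _ (by positivity), ?_⟩⟩⟩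
  ext p
  simp only [Set.mem_iUnion, Set.mem_univ, iff_true, mem_ball]
  obtain ⟨n, hn⟩ := exists_nat_gt (dist p x₀)
  exact ⟨n, hn.trans (by linarith)⟩

end AuxLemmas

/-- Kernel estimate (large distance case, from the proof of Theorem 2.1):
for a strongly singular generalized kernel `K`, if `d(z,z₀) ≥ 1` and
`d(x,z₀) ≤ 2 d(z,z₀)`, then
`∫_{ρ(ȳ,z̄₀) ≥ 2 d(z,z₀)} |K(z,ȳ) − K(z₀,ȳ)| ∏ |f_j(y_j)| dμ⃗(ȳ)
  ≤ C d(z,z₀)^{ε−ε/α} 𝓜_{p₀'}(f⃗)(x)`. -/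
theorem kernel_estimate_far
    {X : Type*} [MetricSpace X] [MeasurableSpace X] [BorelSpace X]
    (μ : Measure X) (κ n : ℝ) (hRD : IsRDSpace μ κ n) (hΦ : HasMeasureFunction μ)
    (m : ℕ) (hm : 0 < m) (ε α p₀ p₀' : ℝ)
    (hε : 0 < ε) (hα0 : 0 < α) (hα1 : α ≤ 1)
    (hp₀ : 1 < p₀) (hconj : 1 / p₀ + 1 / p₀' = 1)
    (K : X → (Fin m → X) → ℝ) (hK : IsSSGKernel μ m κ n ε α p₀ p₀' K) :
    ∃ C : ℝ, 0 < C ∧ ∀ z z₀ x : X, 1 ≤ dist z z₀ → dist x z₀ ≤ 2 * dist z z₀ →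
      ∀ f : Fin m → X → ℝ,
        (∀ j, Measurable (f j)) →
        (∀ j, ∀ (c : X) (rad : ℝ), 0 < rad →
          ∫⁻ y in ball c rad, ENNReal.ofReal (|f j y| ^ p₀') ∂μ < ⊤) →
        (∫⁻ y in {y : Fin m → X | 2 * dist z z₀ ≤ rho z₀ y},
            ENNReal.ofReal |K z y - K z₀ y| * ∏ j, ENNReal.ofReal |f j (y j)|
              ∂(Measure.pi fun _ : Fin m => μ))
          ≤ ENNReal.ofReal (C * dist z z₀ ^ (ε - ε / α)) *
              multiMaximalPow μ p₀' f x := by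
    classical
  obtain ⟨C₁, hC₁, hnC₁, hdb⟩ := hRD.doubling
  obtain ⟨Φ, hΦpos, hΦmono, c₁, c₂, hc₁, hc₂, hΦb⟩ := hΦ
  obtain ⟨hKloc, C_K, hCK, hKb⟩ := hK
  have hpq : p₀.HolderConjugate p₀' := Real.holderConjugate_iff.mpr ⟨hp₀, by rw [← one_div, ← one_div]; exact hconj⟩
  have hp₀'pos : 0 < p₀' := hpq.symm.pos
  have hp₀pos : 0 < p₀ := hpq.pos
  have hn0 : 0 ≤ n := by rw [hnC₁]; exact Real.logb_nonneg one_lt_two hC₁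
  have hC₁pos : 0 < C₁ := lt_of_lt_of_le one_pos hC₁
  have hC₁eq : (2:ℝ) ^ n = C₁ := by
    rw [hnC₁]; exact Real.rpow_logb two_pos (by norm_num) hC₁pos
  set s : ℝ := (m:ℝ) / p₀' with hs_def
  have hs0 : 0 ≤ s := by positivity
  set b : ℝ := n * (m:ℝ) / p₀' with hb_def
  have hns : n * s = b := by rw [hs_def, hb_def]; ring
  set q : ℝ := ε / α with hq_def
  have hq0 : 0 < q := by positivity
  set r : ℝ := (2:ℝ) ^ (-q) with hr_def
  have hr0 : 0 < r := Real.rpow_pos_of_pos two_pos _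
  have hr1 : r < 1 := Real.rpow_lt_one_of_one_lt_of_neg one_lt_two (by linarith)
  set cΦ : ℝ := c₂ * Φ 1 with hcΦ_def
  have hcΦ : 0 < cΦ := mul_pos hc₂ (hΦpos 1 one_pos)
  have h2b : (0:ℝ) < 2 ^ (3 * b) := Real.rpow_pos_of_pos two_pos _
  have hcΦs : (0:ℝ) < cΦ ^ s := Real.rpow_pos_of_pos hcΦ _
  set C₀ : ℝ := C_K * cΦ ^ s * 2 ^ (3 * b) with hC₀_def
  have hC₀pos : 0 < C₀ := by positivity
  refine ⟨C₀ * (r / (1 - r)), mul_pos hC₀pos (div_pos hr0 (by linarith)), ?_⟩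
  intro z z₀ x hd1 hx f hf _hfin
  haveI : Nonempty X := ⟨z⟩
  haveI : SigmaFinite μ :=
    sigmaFinite_of_balls' μ (Classical.arbitrary X) fun rr hrr => hRD.ball_lt_top _ _ hrr
  set d : ℝ := dist z z₀ with hd_def
  have hd0 : 0 < d := lt_of_lt_of_le one_pos hd1
  set π : Measure (Fin m → X) := Measure.pi fun _ : Fin m => μ with hπ_def
  -- growth of balls
  have hgrow : ∀ (x0 : X) (N : ℕ),
      μ (ball x0 ((2:ℝ) ^ N)) ≤ ENNReal.ofReal C₁ ^ N * μ (ball x0 1) := by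
    intro x0 N
    induction N with
    | zero => simp
    | succ N ihN =>
      have h2 : ((2:ℝ) ^ (N + 1)) = 2 * 2 ^ N := by ring
      rw [h2]
      calc μ (ball x0 (2 * 2 ^ N)) ≤ ENNReal.ofReal C₁ * μ (ball x0 (2 ^ N)) :=
            hdb x0 _ (by positivity)
        _ ≤ ENNReal.ofReal C₁ * (ENNReal.ofReal C₁ ^ N * μ (ball x0 1)) :=
            mul_le_mul' le_rfl ihN
        _ = ENNReal.ofReal C₁ ^ (N + 1) * μ (ball x0 1) := by ring
  have hzz : z₀ ≠ z := by
    intro h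
    rw [hd_def, h, dist_self] at hd0
    exact lt_irrefl _ hd0
  have hd1' : 1 ≤ dist z₀ z := by rwa [dist_comm]
  set A : ℕ → Set (Fin m → X) := fun k =>
    {y : Fin m → X | 2 ^ k * d ≤ rho z₀ y ∧ rho z₀ y ≤ 2 ^ (k + 1) * d} with hA_def
  have hKb' : ∀ k : ℕ, 1 ≤ k →
      (∫⁻ y in A k, ENNReal.ofReal (|K z y - K z₀ y| ^ p₀) ∂π) ^ (1 / p₀)
        ≤ ENNReal.ofReal (C_K * d ^ (ε - (b + q)) * 2 ^ (-(k:ℝ) * (b + q))) := by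
    intro k hk
    have h := hKb z₀ z hzz k hk
    rw [dist_comm z₀ z, ← hd_def] at h
    simp only [if_pos hd1, Real.rpow_one, one_mul] at h
    have habs : ∀ y : Fin m → X, |K z₀ y - K z y| = |K z y - K z₀ y| := fun y =>
      abs_sub_comm _ _
    simp only [habs] at h
    refine h.trans (le_of_eq ?_)
    rw [hb_def, hq_def]
  obtain ⟨G, hGmeas, hGle, hGeq⟩ :=
    exists_measurable_le_lintegral_eq
      (π.restrict {y : Fin m → X | 2 * d ≤ rho z₀ y})
      fun y => ENNReal.ofReal |K z y - K z₀ y| * ∏ j, ENNReal.ofReal |f j (y j)|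
  set P : (Fin m → X) → ℝ≥0∞ := fun y => ∏ j, ENNReal.ofReal |f j (y j)| with hP_def
  have hPmeas : Measurable P :=
    Finset.measurable_prod _ fun j _ =>
      ENNReal.measurable_ofReal.comp ((hf j).comp (measurable_pi_apply j)).abs
  have hPtop : ∀ y, P y ≠ ∞ := fun y =>
    (ENNReal.prod_lt_top fun j _ => ENNReal.ofReal_lt_top).ne
  set h' : (Fin m → X) → ℝ≥0∞ := fun y => G y / P y with hh'_def
  have hh'meas : Measurable h' := hGmeas.div hPmeas
  have hGleF : ∀ y, G y ≤ ENNReal.ofReal |K z y - K z₀ y| * P y := fun y => hGle y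
  have hGle' : ∀ y, G y ≤ h' y * P y := by
    intro y
    rcases eq_or_ne (P y) 0 with h0 | h0
    · have hG0 : G y = 0 := by
        have h1 := hGleF y
        rw [h0, mul_zero] at h1
        exact le_antisymm h1 bot_le
      simp [hG0]
    · exact le_of_eq (ENNReal.div_mul_cancel h0 (hPtop y)).symm
  have hh'le : ∀ y, h' y ≤ ENNReal.ofReal |K z y - K z₀ y| := fun y =>
    ENNReal.div_le_of_le_mul (hGleF y)
  -- covering
  have hcover : {y : Fin m → X | 2 * d ≤ rho z₀ y} ⊆ ⋃ k : ℕ, A (k + 1) := by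
    intro y hy
    have hy' : 2 * d ≤ rho z₀ y := hy
    have hρ0 : 0 < rho z₀ y := lt_of_lt_of_le (by linarith) hy'
    set u : ℝ := rho z₀ y / d with hu_def
    have hu2 : 2 ≤ u := (le_div_iff₀ hd0).mpr (by linarith)
    have hu0 : 0 < u := by linarith
    have hrho_eq : rho z₀ y = u * d := by
      rw [hu_def, div_mul_cancel₀ _ hd0.ne']
    have hlog1 : 1 ≤ Real.logb 2 u := by
      rw [Real.le_logb_iff_rpow_le one_lt_two hu0]
      simpa using hu2
    set k' : ℕ := ⌊Real.logb 2 u⌋₊ with hk'_def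
    have hk'1 : 1 ≤ k' := Nat.le_floor (by exact_mod_cast hlog1)
    have hlb : (2:ℝ) ^ k' ≤ u := by
      calc (2:ℝ) ^ k' = 2 ^ (k' : ℝ) := (Real.rpow_natCast 2 k').symm
        _ ≤ 2 ^ Real.logb 2 u :=
            Real.rpow_le_rpow_of_exponent_le one_le_two (Nat.floor_le (by linarith))
        _ = u := Real.rpow_logb two_pos (by norm_num) hu0
    have hub : u ≤ (2:ℝ) ^ (k' + 1) := by
      have h1 : Real.logb 2 u < (k' : ℝ) + 1 := by
        exact_mod_cast Nat.lt_floor_add_one (Real.logb 2 u)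
      calc u = 2 ^ Real.logb 2 u := (Real.rpow_logb two_pos (by norm_num) hu0).symm
        _ ≤ 2 ^ ((k':ℝ) + 1) := Real.rpow_le_rpow_of_exponent_le one_le_two h1.le
        _ = 2 ^ (k' + 1) := by
            rw [← Real.rpow_natCast 2 (k' + 1)]
            push_cast
            ring_nf
    refine Set.mem_iUnion.mpr ⟨k' - 1, ?_⟩
    have hkk : k' - 1 + 1 = k' := Nat.succ_pred_eq_of_pos hk'1
    rw [hkk]
    refine ⟨?_, ?_⟩
    · rw [hrho_eq]
      exact mul_le_mul_of_nonneg_right hlb hd0.le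
    · rw [hrho_eq]
      exact mul_le_mul_of_nonneg_right hub hd0.le
  -- per-annulus bound
  have hmain : ∀ k : ℕ,
      (∫⁻ y in A (k + 1), G y ∂π)
        ≤ ENNReal.ofReal (C₀ * d ^ (ε - q)) * ENNReal.ofReal (r ^ (k + 1)) *
            multiMaximalPow μ p₀' f x := by
    intro k
    set k' : ℕ := k + 1 with hk'_def
    have hk'1 : 1 ≤ k' := Nat.le_add_left 1 k
    set R : ℝ := 2 ^ (k' + 2) * d with hR_def
    have hRpos : 0 < R := by rw [hR_def]; positivity
    have hμB0 : μ (ball z₀ R) ≠ 0 := (hRD.ball_pos z₀ R hRpos).ne'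
    have hμBtop : μ (ball z₀ R) ≠ ⊤ := (hRD.ball_lt_top z₀ R hRpos).ne
    have hsub : A k' ⊆ Set.pi Set.univ fun _ : Fin m => ball z₀ R := by
      intro y hy j _
      have h1 : dist (y j) z₀ ≤ rho z₀ y :=
        le_ciSup (Set.Finite.bddAbove (Set.finite_range fun i => dist (y i) z₀)) j
      have h2 : rho z₀ y ≤ 2 ^ (k' + 1) * d := hy.2
      have h3 : (2:ℝ) ^ (k' + 1) < 2 ^ (k' + 2) := by
        have h4 : (0:ℝ) < 2 ^ (k' + 1) := by positivity
        calc (2:ℝ) ^ (k' + 1) < 2 * 2 ^ (k' + 1) := by linarith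
          _ = 2 ^ (k' + 2) := by ring
      have h5 : dist (y j) z₀ < R := by
        rw [hR_def]
        calc dist (y j) z₀ ≤ 2 ^ (k' + 1) * d := h1.trans h2
          _ < 2 ^ (k' + 2) * d := mul_lt_mul_of_pos_right h3 hd0
      exact mem_ball.mpr h5
    have hxB : x ∈ ball z₀ R := by
      have h8 : (2:ℝ) < 2 ^ (k' + 2) := by
        have h1 : (1:ℝ) ≤ 2 ^ k' := one_le_pow₀ one_le_two
        calc (2:ℝ) < 4 := by norm_num
          _ ≤ 4 * 2 ^ k' := by linarith
          _ = 2 ^ (k' + 2) := by ring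
      refine mem_ball.mpr ?_
      rw [hR_def]
      calc dist x z₀ ≤ 2 * d := hx
        _ < 2 ^ (k' + 2) * d := mul_lt_mul_of_pos_right h8 hd0
    set D : ℕ := ⌈Real.logb 2 d⌉₊ with hD_def
    have hlogd0 : 0 ≤ Real.logb 2 d := Real.logb_nonneg one_lt_two hd1
    have hdD : d ≤ (2:ℝ) ^ D := by
      calc d = 2 ^ Real.logb 2 d := (Real.rpow_logb two_pos (by norm_num) hd0).symm
        _ ≤ 2 ^ (D:ℝ) := Real.rpow_le_rpow_of_exponent_le one_le_two (Nat.le_ceil _)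
        _ = 2 ^ D := Real.rpow_natCast 2 D
    have hμB : μ (ball z₀ R) ≤
        ENNReal.ofReal (2 ^ (n * ((k':ℝ) + 2)) * (2 ^ n * d ^ n) * cΦ) := by
      have hsub2 : ball z₀ R ⊆ ball z₀ ((2:ℝ) ^ (k' + 2 + D)) := by
        apply ball_subset_ball
        rw [hR_def]
        calc (2:ℝ) ^ (k' + 2) * d ≤ 2 ^ (k' + 2) * 2 ^ D :=
              mul_le_mul_of_nonneg_left hdD (by positivity)
          _ = 2 ^ (k' + 2 + D) := (pow_add 2 (k' + 2) D).symm
      have hkey : (C₁:ℝ) ^ (k' + 2 + D) * cΦ ≤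
          2 ^ (n * ((k':ℝ) + 2)) * (2 ^ n * d ^ n) * cΦ := by
        have e1 : (C₁:ℝ) ^ (k' + 2 + D) = 2 ^ (n * ((k':ℝ) + 2)) * 2 ^ (n * (D:ℝ)) := by
          rw [← hC₁eq, ← Real.rpow_natCast ((2:ℝ) ^ n) (k' + 2 + D),
            ← Real.rpow_mul (by norm_num : (0:ℝ) ≤ 2), ← Real.rpow_add two_pos]
          congr 1
          push_cast
          ring
        have e2 : (2:ℝ) ^ (n * (D:ℝ)) ≤ 2 ^ n * d ^ n := by
          calc (2:ℝ) ^ (n * (D:ℝ)) ≤ 2 ^ (n * (Real.logb 2 d + 1)) :=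
                Real.rpow_le_rpow_of_exponent_le one_le_two
                  (mul_le_mul_of_nonneg_left (Nat.ceil_lt_add_one hlogd0).le hn0)
            _ = 2 ^ n * d ^ n := by
              rw [mul_add, mul_one, Real.rpow_add two_pos,
                mul_comm ((2:ℝ) ^ (n * Real.logb 2 d)) _]
              congr 1
              rw [mul_comm n (Real.logb 2 d), Real.rpow_mul (by norm_num : (0:ℝ) ≤ 2),
                Real.rpow_logb two_pos (by norm_num) hd0]
        have h2pos : (0:ℝ) < 2 ^ (n * ((k':ℝ) + 2)) := Real.rpow_pos_of_pos two_pos _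
        rw [e1]
        exact mul_le_mul_of_nonneg_right (mul_le_mul_of_nonneg_left e2 h2pos.le) hcΦ.le
      calc μ (ball z₀ R) ≤ μ (ball z₀ ((2:ℝ) ^ (k' + 2 + D))) := measure_mono hsub2
        _ ≤ ENNReal.ofReal C₁ ^ (k' + 2 + D) * μ (ball z₀ 1) := hgrow z₀ _
        _ ≤ ENNReal.ofReal C₁ ^ (k' + 2 + D) * ENNReal.ofReal cΦ :=
            mul_le_mul' le_rfl (hΦb z₀ 1 one_pos).2
        _ = ENNReal.ofReal ((C₁:ℝ) ^ (k' + 2 + D) * cΦ) := by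
            rw [← ENNReal.ofReal_pow hC₁pos.le, ← ENNReal.ofReal_mul (by positivity)]
        _ ≤ _ := ENNReal.ofReal_le_ofReal hkey
    have hhold : (∫⁻ y in A k', G y ∂π) ≤
        (∫⁻ y in A k', h' y ^ p₀ ∂π) ^ (1 / p₀) *
          (∫⁻ y in A k', P y ^ p₀' ∂π) ^ (1 / p₀') := by
      refine le_trans (lintegral_mono fun y => hGle' y) ?_
      have hH := ENNReal.lintegral_mul_le_Lp_mul_Lq (π.restrict (A k')) hpq
        hh'meas.aemeasurable hPmeas.aemeasurable
      simpa only [Pi.mul_apply] using hH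
    have hfac1 : (∫⁻ y in A k', h' y ^ p₀ ∂π) ^ (1 / p₀) ≤
        ENNReal.ofReal (C_K * d ^ (ε - (b + q)) * 2 ^ (-(k':ℝ) * (b + q))) := by
      refine le_trans ?_ (hKb' k' hk'1)
      refine ENNReal.rpow_le_rpow ?_ (by positivity)
      refine lintegral_mono fun y => ?_
      rw [← ENNReal.ofReal_rpow_of_nonneg (abs_nonneg _) hp₀pos.le]
      exact ENNReal.rpow_le_rpow (hh'le y) hp₀pos.le
    have hfac2 : (∫⁻ y in A k', P y ^ p₀' ∂π) ^ (1 / p₀') ≤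
        μ (ball z₀ R) ^ s * multiMaximalPow μ p₀' f x := by
      have hgmeas : ∀ j : Fin m, Measurable fun t => ENNReal.ofReal (|f j t| ^ p₀') :=
        fun j => ENNReal.measurable_ofReal.comp ((hf j).abs.pow measurable_const)
      have step1 : (∫⁻ y in A k', P y ^ p₀' ∂π) ≤
          ∏ j, ∫⁻ t in ball z₀ R, ENNReal.ofReal (|f j t| ^ p₀') ∂μ := by
        have hPp : ∀ y : Fin m → X,
            P y ^ p₀' = ∏ j, ENNReal.ofReal (|f j (y j)| ^ p₀') := by
          intro y
          rw [hP_def, ← ENNReal.prod_rpow_of_nonneg hp₀'pos.le]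
          exact Finset.prod_congr rfl fun j _ =>
            ENNReal.ofReal_rpow_of_nonneg (abs_nonneg _) hp₀'pos.le
        calc (∫⁻ y in A k', P y ^ p₀' ∂π)
            = ∫⁻ y in A k', ∏ j, ENNReal.ofReal (|f j (y j)| ^ p₀') ∂π :=
              lintegral_congr fun y => hPp y
          _ ≤ ∫⁻ y in Set.pi Set.univ (fun _ : Fin m => ball z₀ R),
                ∏ j, ENNReal.ofReal (|f j (y j)| ^ p₀') ∂π := lintegral_mono_set hsub
          _ = ∫⁻ y, (Set.pi Set.univ (fun _ : Fin m => ball z₀ R)).indicator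
                (fun y => ∏ j, ENNReal.ofReal (|f j (y j)| ^ p₀')) y ∂π := by
              rw [lintegral_indicator (MeasurableSet.univ_pi fun _ => measurableSet_ball)]
          _ = ∫⁻ y, ∏ j, (ball z₀ R).indicator
                (fun t => ENNReal.ofReal (|f j t| ^ p₀')) (y j) ∂π := by
              refine lintegral_congr fun y => ?_
              by_cases hy : y ∈ Set.pi Set.univ fun _ : Fin m => ball z₀ R
              · rw [Set.indicator_of_mem hy]
                exact Finset.prod_congr rfl fun j _ =>
                  (Set.indicator_of_mem (show y j ∈ ball z₀ R from hy j (Set.mem_univ j))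
                    fun t => ENNReal.ofReal (|f j t| ^ p₀')).symm
              · rw [Set.indicator_of_notMem hy]
                obtain ⟨j, hj⟩ : ∃ j, y j ∉ ball z₀ R := by
                  by_contra hc
                  push_neg at hc
                  exact hy fun j _ => hc j
                exact (Finset.prod_eq_zero (Finset.mem_univ j)
                  (Set.indicator_of_notMem hj _)).symm
          _ = ∏ j, ∫⁻ t, (ball z₀ R).indicator
                (fun t => ENNReal.ofReal (|f j t| ^ p₀')) t ∂μ := by
              rw [hπ_def]
              exact lintegral_pi_prod' μ m _ fun j => (hgmeas j).indicator measurableSet_ball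
          _ = ∏ j, ∫⁻ t in ball z₀ R, ENNReal.ofReal (|f j t| ^ p₀') ∂μ :=
              Finset.prod_congr rfl fun j _ => lintegral_indicator measurableSet_ball _
      have step2 : (∏ j, ∫⁻ t in ball z₀ R, ENNReal.ofReal (|f j t| ^ p₀') ∂μ) ≤
          μ (ball z₀ R) ^ (m:ℕ) * multiMaximal μ (fun j y => |f j y| ^ p₀') x := by
        have hone : ∀ j : Fin m,
            μ (ball z₀ R) *
              ((μ (ball z₀ R))⁻¹ * ∫⁻ t in ball z₀ R, ENNReal.ofReal (|f j t| ^ p₀') ∂μ)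
            = ∫⁻ t in ball z₀ R, ENNReal.ofReal (|f j t| ^ p₀') ∂μ := by
          intro j
          rw [← mul_assoc, ENNReal.mul_inv_cancel hμB0 hμBtop, one_mul]
        have hfact : (∏ j, ∫⁻ t in ball z₀ R, ENNReal.ofReal (|f j t| ^ p₀') ∂μ) =
            μ (ball z₀ R) ^ (m:ℕ) *
              ∏ j, ((μ (ball z₀ R))⁻¹ *
                ∫⁻ t in ball z₀ R, ENNReal.ofReal (|f j t| ^ p₀') ∂μ) := by
          calc (∏ j, ∫⁻ t in ball z₀ R, ENNReal.ofReal (|f j t| ^ p₀') ∂μ)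
              = ∏ j, (μ (ball z₀ R) *
                  ((μ (ball z₀ R))⁻¹ *
                    ∫⁻ t in ball z₀ R, ENNReal.ofReal (|f j t| ^ p₀') ∂μ)) :=
                Finset.prod_congr rfl fun j _ => (hone j).symm
            _ = (∏ _j : Fin m, μ (ball z₀ R)) *
                  ∏ j, ((μ (ball z₀ R))⁻¹ *
                    ∫⁻ t in ball z₀ R, ENNReal.ofReal (|f j t| ^ p₀') ∂μ) :=
                Finset.prod_mul_distrib
            _ = _ := by rw [Finset.prod_const, Finset.card_univ, Fintype.card_fin]
        rw [hfact]
        refine mul_le_mul' le_rfl ?_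
        calc (∏ j, ((μ (ball z₀ R))⁻¹ *
                ∫⁻ t in ball z₀ R, ENNReal.ofReal (|f j t| ^ p₀') ∂μ))
            = ∏ j, ((μ (ball z₀ R))⁻¹ *
                ∫⁻ t in ball z₀ R, ENNReal.ofReal |(|f j t| ^ p₀')| ∂μ) := by
              refine Finset.prod_congr rfl fun j _ => ?_
              congr 1
              refine lintegral_congr fun t => ?_
              rw [abs_of_nonneg (Real.rpow_nonneg (abs_nonneg _) _)]
          _ ≤ multiMaximal μ (fun j yy => |f j yy| ^ p₀') x := by
              refine le_iSup_of_le z₀ (le_iSup_of_le R (le_iSup_of_le hRpos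
                (le_iSup_of_le hxB ?_)))
              exact le_rfl
      calc (∫⁻ y in A k', P y ^ p₀' ∂π) ^ (1 / p₀')
          ≤ (μ (ball z₀ R) ^ (m:ℕ) *
              multiMaximal μ (fun j y => |f j y| ^ p₀') x) ^ (1 / p₀') :=
            ENNReal.rpow_le_rpow (step1.trans step2) (by positivity)
        _ = μ (ball z₀ R) ^ s * multiMaximalPow μ p₀' f x := by
            rw [ENNReal.mul_rpow_of_nonneg _ _ (by positivity)]
            congr 1
            rw [← ENNReal.rpow_natCast (μ (ball z₀ R)) m, ← ENNReal.rpow_mul]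
            congr 1
            rw [hs_def]
            ring
    have hcomb : (∫⁻ y in A k', G y ∂π) ≤
        ENNReal.ofReal (C_K * d ^ (ε - (b + q)) * 2 ^ (-(k':ℝ) * (b + q))) *
          (ENNReal.ofReal ((2 ^ (n * ((k':ℝ) + 2)) * (2 ^ n * d ^ n) * cΦ) ^ s) *
            multiMaximalPow μ p₀' f x) := by
      refine hhold.trans (mul_le_mul' hfac1 (hfac2.trans ?_))
      refine mul_le_mul' ?_ le_rfl
      calc μ (ball z₀ R) ^ s
          ≤ (ENNReal.ofReal (2 ^ (n * ((k':ℝ) + 2)) * (2 ^ n * d ^ n) * cΦ)) ^ s :=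
            ENNReal.rpow_le_rpow hμB hs0
        _ = ENNReal.ofReal ((2 ^ (n * ((k':ℝ) + 2)) * (2 ^ n * d ^ n) * cΦ) ^ s) :=
            ENNReal.ofReal_rpow_of_nonneg (by positivity) hs0
    have hreal : C_K * d ^ (ε - (b + q)) * 2 ^ (-(k':ℝ) * (b + q)) *
        ((2 ^ (n * ((k':ℝ) + 2)) * (2 ^ n * d ^ n) * cΦ) ^ s) =
        C₀ * d ^ (ε - q) * r ^ (k':ℕ) := by
      have hMbs : ((2:ℝ) ^ (n * ((k':ℝ) + 2)) * (2 ^ n * d ^ n) * cΦ) ^ s =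
          2 ^ (n * ((k':ℝ) + 2) * s) * (2 ^ (n * s) * d ^ (n * s)) * cΦ ^ s := by
        rw [Real.mul_rpow (by positivity) hcΦ.le, Real.mul_rpow (by positivity) (by positivity),
          Real.mul_rpow (by positivity) (by positivity),
          ← Real.rpow_mul (by norm_num : (0:ℝ) ≤ 2), ← Real.rpow_mul (by norm_num : (0:ℝ) ≤ 2),
          ← Real.rpow_mul hd0.le]
      have hrk : (r:ℝ) ^ (k':ℕ) = 2 ^ (-q * (k':ℝ)) := by
        rw [hr_def, ← Real.rpow_natCast ((2:ℝ) ^ (-q)) k',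
          ← Real.rpow_mul (by norm_num : (0:ℝ) ≤ 2)]
      rw [hMbs, hrk, hC₀_def]
      calc C_K * d ^ (ε - (b + q)) * 2 ^ (-(k':ℝ) * (b + q)) *
            (2 ^ (n * ((k':ℝ) + 2) * s) * (2 ^ (n * s) * d ^ (n * s)) * cΦ ^ s)
          = C_K * cΦ ^ s *
              (2 ^ (-(k':ℝ) * (b + q)) * 2 ^ (n * ((k':ℝ) + 2) * s) * 2 ^ (n * s)) *
              (d ^ (ε - (b + q)) * d ^ (n * s)) := by ring
        _ = C_K * cΦ ^ s * 2 ^ (-(k':ℝ) * (b + q) + n * ((k':ℝ) + 2) * s + n * s) *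
              d ^ (ε - (b + q) + n * s) := by
            rw [← Real.rpow_add two_pos, ← Real.rpow_add two_pos, ← Real.rpow_add hd0]
        _ = C_K * cΦ ^ s * 2 ^ (3 * b + -q * (k':ℝ)) * d ^ (ε - q) := by
            rw [show -(k':ℝ) * (b + q) + n * ((k':ℝ) + 2) * s + n * s
                  = 3 * b + -q * (k':ℝ) by rw [← hns]; ring,
              show ε - (b + q) + n * s = ε - q by rw [← hns]; ring]
        _ = C_K * cΦ ^ s * 2 ^ (3 * b) * d ^ (ε - q) * 2 ^ (-q * (k':ℝ)) := by
            rw [Real.rpow_add two_pos]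
            ring
    calc (∫⁻ y in A k', G y ∂π) ≤ _ := hcomb
      _ = ENNReal.ofReal (C_K * d ^ (ε - (b + q)) * 2 ^ (-(k':ℝ) * (b + q)) *
            ((2 ^ (n * ((k':ℝ) + 2)) * (2 ^ n * d ^ n) * cΦ) ^ s)) *
            multiMaximalPow μ p₀' f x := by
          rw [← mul_assoc, ← ENNReal.ofReal_mul (by positivity)]
      _ = ENNReal.ofReal (C₀ * d ^ (ε - q) * r ^ (k':ℕ)) * multiMaximalPow μ p₀' f x := by
          rw [hreal]
      _ = ENNReal.ofReal (C₀ * d ^ (ε - q)) * ENNReal.ofReal (r ^ (k':ℕ)) *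
            multiMaximalPow μ p₀' f x := by
          rw [ENNReal.ofReal_mul (by positivity)]
  -- geometric series
  have hgeom : (∑' k : ℕ, ENNReal.ofReal (r ^ (k + 1))) = ENNReal.ofReal (r / (1 - r)) := by
    have h1 : ∀ k : ℕ, ENNReal.ofReal (r ^ (k + 1)) = ENNReal.ofReal r * ENNReal.ofReal r ^ k := by
      intro k
      rw [pow_succ, ENNReal.ofReal_mul (pow_nonneg hr0.le k), ENNReal.ofReal_pow hr0.le, mul_comm]
    calc (∑' k : ℕ, ENNReal.ofReal (r ^ (k + 1)))
        = ENNReal.ofReal r * ∑' k : ℕ, ENNReal.ofReal r ^ k := by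
          rw [← ENNReal.tsum_mul_left]
          exact tsum_congr h1
      _ = ENNReal.ofReal r * (1 - ENNReal.ofReal r)⁻¹ := by rw [ENNReal.tsum_geometric]
      _ = ENNReal.ofReal (r / (1 - r)) := by
          rw [← ENNReal.ofReal_one, ← ENNReal.ofReal_sub 1 hr0.le,
            ← ENNReal.ofReal_inv_of_pos (by linarith), ← ENNReal.ofReal_mul hr0.le,
            div_eq_mul_inv]
  -- assemble
  calc (∫⁻ y in {y : Fin m → X | 2 * d ≤ rho z₀ y},
        ENNReal.ofReal |K z y - K z₀ y| * ∏ j, ENNReal.ofReal |f j (y j)| ∂π)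
      = ∫⁻ y in {y : Fin m → X | 2 * d ≤ rho z₀ y}, G y ∂π := hGeq
    _ ≤ ∫⁻ y in ⋃ k : ℕ, A (k + 1), G y ∂π := lintegral_mono_set hcover
    _ ≤ ∑' k : ℕ, ∫⁻ y in A (k + 1), G y ∂π := lintegral_iUnion_le _ _
    _ ≤ ∑' k : ℕ, (ENNReal.ofReal (C₀ * d ^ (ε - q)) * ENNReal.ofReal (r ^ (k + 1)) *
          multiMaximalPow μ p₀' f x) := ENNReal.tsum_le_tsum hmain
    _ = (∑' k : ℕ, ENNReal.ofReal (r ^ (k + 1))) *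
          (ENNReal.ofReal (C₀ * d ^ (ε - q)) * multiMaximalPow μ p₀' f x) := by
        rw [← ENNReal.tsum_mul_right]
        exact tsum_congr fun k => by ring
    _ ≤ ENNReal.ofReal (r / (1 - r)) *
          (ENNReal.ofReal (C₀ * d ^ (ε - q)) * multiMaximalPow μ p₀' f x) :=
        mul_le_mul' hgeom.le le_rfl
    _ = ENNReal.ofReal (C₀ * (r / (1 - r)) * d ^ (ε - q)) * multiMaximalPow μ p₀' f x := by
        rw [← mul_assoc, ← ENNReal.ofReal_mul (div_nonneg hr0.le (by linarith))]
        congr 2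
        ring
end
end

section
/- Let (X,d,μ) be an RD-space with μ(X)=∞ and let T be an m-linear operator that is bounded from L^{r₁}(X)×⋯×L^{r_m}(X) to L^{r,∞}(X), where 1≤r₁,…,r_m<∞ and 1/r=1/r₁+⋯+1/r_m, and let p₀' ≥ max{r₁,…,r_m}. Then for every 0<δ<r there exists C>0 such that for every ball B⊂X, every x∈B, and every m-tuple f⃗=(f₁,…,f_m) of bounded measurable functions with bounded support, (μ(B)^{-1}∫_B |T(f₁χ_{32B},…,f_mχ_{32B})(z)|^δ dμ(z))^{1/δ} ≤ C·𝓜_{p₀'}(f⃗)(x), where 32B denotes the concentric 32-fold dilate of B and χ_E the indicator of E. -/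
open MeasureTheory Metric ENNReal Set Bornology
open scoped BigOperators NNReal ENNReal

noncomputable section

open Filter in
private lemma kolmogorov_aux {X : Type*} [MeasurableSpace X] (μ : Measure X) (B : Set X)
    (g : X → ℝ) (δ s : ℝ) (hδ0 : 0 < δ) (hδs : δ < s)
    (hB0 : μ B ≠ 0) (hBt : μ B ≠ ⊤)
    (N : ℝ≥0∞)
    (hN : ∀ t : ℝ, 0 < t → ENNReal.ofReal t * (μ {y | t < |g y|}) ^ (1 / s) ≤ N) :
    ∫⁻ z in B, ENNReal.ofReal (|g z| ^ δ) ∂μ ≤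
      ENNReal.ofReal (1 + δ / (s - δ)) * N ^ δ * μ B ^ (1 - δ / s) := by
  have hs : 0 < s := hδ0.trans hδs
  have hCδ : (0:ℝ) < 1 + δ / (s - δ) := by
    have : 0 < δ / (s - δ) := div_pos hδ0 (by linarith)
    linarith
  -- trivial cases
  rcases eq_or_ne N 0 with hN0 | hN0
  · -- g = 0 a.e.
    have hzero : μ {y | 0 < |g y|} = 0 := by
      have hsub : {y | 0 < |g y|} ⊆ ⋃ n : ℕ, {y | 1 / ((n:ℝ) + 1) < |g y|} := by
        intro y hy
        obtain ⟨n, hn⟩ := exists_nat_one_div_lt (K := ℝ) (show (0:ℝ) < |g y| from hy)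
        exact mem_iUnion.2 ⟨n, hn⟩
      have hz : ∀ n : ℕ, μ {y | 1 / ((n:ℝ) + 1) < |g y|} = 0 := by
        intro n
        have ht : (0:ℝ) < 1 / ((n:ℝ) + 1) := by positivity
        have h3 := hN _ ht
        rw [hN0, nonpos_iff_eq_zero, mul_eq_zero] at h3
        rcases h3 with h | h
        · rw [ENNReal.ofReal_eq_zero] at h; linarith
        · rcases ENNReal.rpow_eq_zero_iff.1 h with ⟨h1, _⟩ | ⟨_, h2⟩
          · exact h1
          · exact absurd h2 (not_lt.2 (by positivity))
      exact le_antisymm (le_trans (measure_mono hsub)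
        (le_of_eq (measure_iUnion_null hz))) (by simp)
    have hae : ∀ᵐ y ∂(μ.restrict B), ENNReal.ofReal (|g y| ^ δ) ≤ 0 := by
      refine ae_restrict_of_ae ?_
      have : ∀ᵐ y ∂μ, ¬ (0 < |g y|) := by
        rw [ae_iff]; simpa using hzero
      filter_upwards [this] with y hy
      have : |g y| = 0 := le_antisymm (not_lt.1 hy) (abs_nonneg _)
      simp [this, Real.zero_rpow hδ0.ne']
    calc ∫⁻ z in B, ENNReal.ofReal (|g z| ^ δ) ∂μ ≤ ∫⁻ _ in B, 0 ∂μ := lintegral_mono_ae hae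
    _ ≤ _ := by simp
  rcases eq_or_ne N ⊤ with hNt | hNt
  · have : ENNReal.ofReal (1 + δ / (s - δ)) * N ^ δ * μ B ^ (1 - δ / s) = ⊤ := by
      rw [hNt, ENNReal.top_rpow_of_pos hδ0]
      rw [ENNReal.mul_top (by simp [hCδ.ne', not_le.2 hCδ] ), ENNReal.top_mul]
      exact (ENNReal.rpow_pos (pos_iff_ne_zero.2 hB0) hBt).ne'
    rw [this]; exact le_top
  -- main case
  have hμBpos : 0 < (μ B).toReal := ENNReal.toReal_pos hB0 hBt
  have hNpos : 0 < N.toReal := ENNReal.toReal_pos hN0 hNt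
  set A : ℝ := N.toReal * (μ B).toReal ^ (-(1/s)) with hA_def
  have hA : 0 < A := by positivity
  -- measurable minorant
  obtain ⟨G, hGm, hGle, hGeq⟩ :=
    exists_measurable_le_lintegral_eq (μ.restrict B) (fun z => ENNReal.ofReal (|g z| ^ δ))
  have hGfin : ∀ z, G z ≠ ⊤ := fun z => ((hGle z).trans_lt ENNReal.ofReal_lt_top).ne
  set h : X → ℝ := fun z => (G z).toReal ^ (1/δ) with hh_def
  have hhm : Measurable h := (ENNReal.measurable_toReal.comp hGm).pow measurable_const
  have hid : ∀ z, ENNReal.ofReal (h z ^ δ) = G z := by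
    intro z
    have : h z ^ δ = (G z).toReal := by
      rw [hh_def, ← Real.rpow_mul ENNReal.toReal_nonneg, one_div,
        inv_mul_cancel₀ hδ0.ne', Real.rpow_one]
    rw [this, ENNReal.ofReal_toReal (hGfin z)]
  have key : ∫⁻ z in B, ENNReal.ofReal (|g z| ^ δ) ∂μ =
      ENNReal.ofReal δ * ∫⁻ t in Ioi 0, (μ.restrict B) {a | t < h a}
        * ENNReal.ofReal (t ^ (δ - 1)) ∂volume := by
    rw [hGeq]
    have := lintegral_rpow_eq_lintegral_meas_lt_mul (μ.restrict B)
      (f := h) (Eventually.of_forall fun z => Real.rpow_nonneg ENNReal.toReal_nonneg _)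
      hhm.aemeasurable hδ0
    simp_rw [hid] at this
    exact this
  rw [key]
  -- split the t-integral
  rw [show Ioi (0:ℝ) = Ioc 0 A ∪ Ioi A from (Ioc_union_Ioi_eq_Ioi hA.le).symm,
    lintegral_union measurableSet_Ioi Ioc_disjoint_Ioi_same]
  have bound1 : ∫⁻ t in Ioc 0 A, (μ.restrict B) {a | t < h a}
      * ENNReal.ofReal (t ^ (δ - 1)) ∂volume ≤ μ B * ENNReal.ofReal (A ^ δ / δ) := by
    have step : ∫⁻ t in Ioc 0 A, (μ.restrict B) {a | t < h a}
        * ENNReal.ofReal (t ^ (δ - 1)) ∂volume ≤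
        ∫⁻ t in Ioc 0 A, μ B * ENNReal.ofReal (t ^ (δ - 1)) ∂volume := by
      refine lintegral_mono fun t => ?_
      exact mul_le_mul_left
        ((measure_mono (subset_univ _)).trans (Measure.restrict_apply_univ _).le) _
    refine step.trans ?_
    rw [lintegral_const_mul' _ _ hBt]
    gcongr
    have hint : IntegrableOn (fun t : ℝ => t ^ (δ - 1)) (Ioc 0 A) volume :=
      (intervalIntegral.intervalIntegrable_rpow' (by linarith : (-1:ℝ) < δ - 1)).1
    have hnn : 0 ≤ᵐ[volume.restrict (Ioc 0 A)] fun t : ℝ => t ^ (δ - 1) := by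
      filter_upwards [self_mem_ae_restrict measurableSet_Ioc] with t ht
      exact Real.rpow_nonneg ht.1.le _
    rw [← ofReal_integral_eq_lintegral_ofReal hint hnn]
    have : ∫ t in Ioc 0 A, t ^ (δ - 1) ∂volume = A ^ δ / δ := by
      rw [← intervalIntegral.integral_of_le hA.le,
        integral_rpow (Or.inl (by linarith : (-1:ℝ) < δ - 1))]
      rw [Real.zero_rpow (by linarith : δ - 1 + 1 ≠ 0)]
      ring_nf
    rw [this]
  have bound2 : ∫⁻ t in Ioi A, (μ.restrict B) {a | t < h a}
      * ENNReal.ofReal (t ^ (δ - 1)) ∂volume ≤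
      N ^ s * ENNReal.ofReal (A ^ (δ - s) / (s - δ)) := by
    have step : ∫⁻ t in Ioi A, (μ.restrict B) {a | t < h a}
        * ENNReal.ofReal (t ^ (δ - 1)) ∂volume ≤
        ∫⁻ t in Ioi A, N ^ s * ENNReal.ofReal (t ^ (δ - 1 - s)) ∂volume := by
      refine lintegral_mono_ae ?_
      filter_upwards [self_mem_ae_restrict measurableSet_Ioi] with t htA
      have ht : (0:ℝ) < t := hA.trans htA
      have hsub : {a | t < h a} ⊆ {y | t < |g y|} := by
        intro a ha
        have h1 : (G a).toReal ≤ |g a| ^ δ :=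
          ENNReal.toReal_le_of_le_ofReal (Real.rpow_nonneg (abs_nonneg _) _) (hGle a)
        have h2 : h a ≤ |g a| := by
          calc h a = (G a).toReal ^ (1/δ) := rfl
          _ ≤ (|g a| ^ δ) ^ (1/δ) := Real.rpow_le_rpow ENNReal.toReal_nonneg h1 (by positivity)
          _ = |g a| := by
            rw [← Real.rpow_mul (abs_nonneg _), mul_one_div, div_self hδ0.ne', Real.rpow_one]
        exact lt_of_lt_of_le ha h2
      have hdist : (μ.restrict B) {a | t < h a} ≤ N ^ s * ENNReal.ofReal (t ^ (-s)) := by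
        refine le_trans (le_trans (Measure.restrict_apply_le _ _) (measure_mono hsub)) ?_
        have h1 := hN t ht
        have h2 : (ENNReal.ofReal t * (μ {y | t < |g y|}) ^ (1/s)) ^ s ≤ N ^ s :=
          ENNReal.rpow_le_rpow h1 hs.le
        rw [ENNReal.mul_rpow_of_nonneg _ _ hs.le, ← ENNReal.rpow_mul,
          one_div, inv_mul_cancel₀ hs.ne', ENNReal.rpow_one] at h2
        have ht0 : ENNReal.ofReal t ^ s ≠ 0 := by
          simp [ENNReal.rpow_eq_zero_iff, ENNReal.ofReal_eq_zero, not_le.2 ht, ENNReal.ofReal_ne_top]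
        have htt : ENNReal.ofReal t ^ s ≠ ⊤ :=
          ENNReal.rpow_ne_top_of_nonneg hs.le ENNReal.ofReal_ne_top
        rw [mul_comm] at h2
        rw [← ENNReal.le_div_iff_mul_le (Or.inl ht0) (Or.inl htt)] at h2
        refine h2.trans (le_of_eq ?_)
        rw [div_eq_mul_inv, ENNReal.ofReal_rpow_of_pos ht,
          ← ENNReal.ofReal_inv_of_pos (Real.rpow_pos_of_pos ht s),
          ← Real.rpow_neg ht.le]
      calc (μ.restrict B) {a | t < h a} * ENNReal.ofReal (t ^ (δ - 1)) ≤
          N ^ s * ENNReal.ofReal (t ^ (-s)) * ENNReal.ofReal (t ^ (δ - 1)) := by gcongr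
      _ = N ^ s * ENNReal.ofReal (t ^ (δ - 1 - s)) := by
          rw [mul_assoc, ← ENNReal.ofReal_mul (Real.rpow_nonneg ht.le _),
            ← Real.rpow_add ht]
          ring_nf
    refine step.trans ?_
    rw [lintegral_const_mul' _ _ (ENNReal.rpow_ne_top_of_nonneg hs.le hNt)]
    gcongr
    have hlt : δ - 1 - s < -1 := by linarith
    have hint : IntegrableOn (fun t : ℝ => t ^ (δ - 1 - s)) (Ioi A) volume :=
      integrableOn_Ioi_rpow_of_lt hlt hA
    have hnn : 0 ≤ᵐ[volume.restrict (Ioi A)] fun t : ℝ => t ^ (δ - 1 - s) := by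
      filter_upwards [self_mem_ae_restrict measurableSet_Ioi] with t ht
      exact Real.rpow_nonneg (hA.trans ht).le _
    rw [← ofReal_integral_eq_lintegral_ofReal hint hnn, integral_Ioi_rpow_of_lt hlt hA]
    apply le_of_eq
    congr 1
    rw [show δ - 1 - s + 1 = δ - s by ring]
    have h1 : δ - s ≠ 0 := by linarith
    have h2 : s - δ ≠ 0 := by linarith
    field_simp
    ring
  -- combine the two bounds
  refine le_trans (mul_le_mul_right (add_le_add bound1 bound2) _) ?_
  rw [mul_add]
  have hconv : ∀ a : ℝ, ENNReal.ofReal (A ^ a) = N ^ a * μ B ^ (-(a / s)) := by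
    intro a
    have hAe : A ^ a = N.toReal ^ a * (μ B).toReal ^ (-(a / s)) := by
      rw [hA_def, Real.mul_rpow hNpos.le (Real.rpow_nonneg ENNReal.toReal_nonneg _),
        ← Real.rpow_mul ENNReal.toReal_nonneg]
      congr 2
      ring
    rw [hAe, ENNReal.ofReal_mul (Real.rpow_nonneg hNpos.le _),
      ← ENNReal.ofReal_rpow_of_pos hNpos, ← ENNReal.ofReal_rpow_of_pos hμBpos,
      ENNReal.ofReal_toReal hNt, ENNReal.ofReal_toReal hBt]
  have hδcan : ENNReal.ofReal δ * ENNReal.ofReal δ⁻¹ = 1 := by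
    rw [← ENNReal.ofReal_mul hδ0.le, mul_inv_cancel₀ hδ0.ne', ENNReal.ofReal_one]
  have e1 : ENNReal.ofReal δ * (μ B * ENNReal.ofReal (A ^ δ / δ)) =
      N ^ δ * μ B ^ (1 - δ / s) := by
    rw [div_eq_mul_inv, ENNReal.ofReal_mul (Real.rpow_nonneg hA.le _), hconv δ]
    calc ENNReal.ofReal δ * (μ B * (N ^ δ * μ B ^ (-(δ / s)) * ENNReal.ofReal δ⁻¹))
        = (ENNReal.ofReal δ * ENNReal.ofReal δ⁻¹) *
            (N ^ δ * (μ B ^ (1:ℝ) * μ B ^ (-(δ / s)))) := by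
          rw [ENNReal.rpow_one]; ring
      _ = N ^ δ * μ B ^ (1 - δ / s) := by
          rw [hδcan, one_mul, ← ENNReal.rpow_add _ _ hB0 hBt]
          congr 2
  have e2 : ENNReal.ofReal δ * (N ^ s * ENNReal.ofReal (A ^ (δ - s) / (s - δ))) =
      ENNReal.ofReal (δ / (s - δ)) * (N ^ δ * μ B ^ (1 - δ / s)) := by
    rw [div_eq_mul_inv, ENNReal.ofReal_mul (Real.rpow_nonneg hA.le _), hconv (δ - s)]
    have hNs : N ^ s * N ^ (δ - s) = N ^ δ := by
      rw [← ENNReal.rpow_add _ _ hN0 hNt]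
      congr 1
      ring
    have hμe : μ B ^ (-((δ - s) / s)) = μ B ^ (1 - δ / s) := by
      congr 1
      field_simp
      ring
    have hofδ : ENNReal.ofReal δ * ENNReal.ofReal (s - δ)⁻¹ =
        ENNReal.ofReal (δ / (s - δ)) := by
      rw [← ENNReal.ofReal_mul hδ0.le, div_eq_mul_inv]
    calc ENNReal.ofReal δ * (N ^ s * (N ^ (δ - s) * μ B ^ (-((δ - s) / s)) *
          ENNReal.ofReal (s - δ)⁻¹))
        = (ENNReal.ofReal δ * ENNReal.ofReal (s - δ)⁻¹) *
            ((N ^ s * N ^ (δ - s)) * μ B ^ (-((δ - s) / s))) := by ring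
      _ = _ := by rw [hofδ, hNs, hμe]
  rw [e1, e2, show ENNReal.ofReal (1 + δ / (s - δ)) * N ^ δ * μ B ^ (1 - δ / s) =
      ENNReal.ofReal (1 + δ / (s - δ)) * (N ^ δ * μ B ^ (1 - δ / s)) by ring,
    ENNReal.ofReal_add one_pos.le (le_of_lt (div_pos hδ0 (by linarith))),
    ENNReal.ofReal_one, add_mul, one_mul]

private lemma lp_compare_aux {X : Type*} [MeasurableSpace X] (μ : Measure X) (B : Set X)
    (f : X → ℝ) (hf : Measurable f) (a b : ℝ) (ha : 0 < a) (hab : a ≤ b) :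
    (∫⁻ y in B, ENNReal.ofReal (|f y| ^ a) ∂μ) ^ (1 / a) ≤
      (∫⁻ y in B, ENNReal.ofReal (|f y| ^ b) ∂μ) ^ (1 / b) * (μ B) ^ (1 / a - 1 / b) := by
  have hb : 0 < b := ha.trans_le hab
  have key := eLpNorm_le_eLpNorm_mul_rpow_measure_univ (μ := μ.restrict B) (f := f)
    (p := ENNReal.ofReal a) (q := ENNReal.ofReal b)
    (ENNReal.ofReal_le_ofReal hab) hf.aestronglyMeasurable
  rw [eLpNorm_eq_lintegral_rpow_enorm_toReal (by simp [ENNReal.ofReal_eq_zero, not_le, ha])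
      ENNReal.ofReal_ne_top,
    eLpNorm_eq_lintegral_rpow_enorm_toReal (by simp [ENNReal.ofReal_eq_zero, not_le, hb])
      ENNReal.ofReal_ne_top,
    ENNReal.toReal_ofReal ha.le, ENNReal.toReal_ofReal hb.le,
    Measure.restrict_apply_univ] at key
  have conv : ∀ (p : ℝ), 0 ≤ p → ∀ y : X,
      (‖f y‖ₑ) ^ p = ENNReal.ofReal (|f y| ^ p) := by
    intro p hp y
    rw [Real.enorm_eq_ofReal_abs, ENNReal.ofReal_rpow_of_nonneg (abs_nonneg _) hp]
  simp_rw [conv a ha.le, conv b hb.le] at key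
  exact key

private lemma rpow_finset_sum {ι : Type*} (x : ℝ≥0∞) (hx : x ≠ 0) (hx' : x ≠ ⊤)
    (s : Finset ι) (a : ι → ℝ) :
    x ^ (∑ i ∈ s, a i) = ∏ i ∈ s, x ^ a i := by
  induction s using Finset.cons_induction with
  | empty => simp
  | cons i s hi ih => rw [Finset.sum_cons, Finset.prod_cons, ENNReal.rpow_add _ _ hx hx', ih]

/-- Local estimate for the "good" part (case 1 of the proof of Theorem 2.1):
if the `m`-linear operator `T` is bounded from `L^{r₁}×⋯×L^{r_m}` to `L^{r,∞}`,
`p₀' ≥ max r_j` and `0 < δ < r`, then for any ball `B` and `x ∈ B`,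
`(μ(B)⁻¹ ∫_B |T(f₁χ_{32B},…,f_mχ_{32B})|^δ dμ)^{1/δ} ≤ C 𝓜_{p₀'}(f⃗)(x)`. -/
theorem local_estimate_weak_r
    {X : Type*} [MetricSpace X] [MeasurableSpace X] [BorelSpace X]
    (μ : Measure X) (κ n : ℝ) (hRD : IsRDSpace μ κ n)
    (m : ℕ) (hm : 0 < m) (r : Fin m → ℝ) (hr : ∀ j, 1 ≤ r j)
    (p₀' : ℝ) (hp₀' : ∀ j, r j ≤ p₀')
    (T : (Fin m → X → ℝ) → X → ℝ)
    (hT : ∃ C : ℝ, 0 < C ∧ ∀ f : Fin m → X → ℝ, (∀ j, Measurable (f j)) →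
      weakLpNormW μ (∑ j, 1 / r j)⁻¹ (fun _ => 1) (T f) ≤
        ENNReal.ofReal C * ∏ j, lpNormW μ (r j) (fun _ => 1) (f j))
    (δ : ℝ) (hδ0 : 0 < δ) (hδ : δ < (∑ j, 1 / r j)⁻¹) :
    ∃ C : ℝ, 0 < C ∧ ∀ (c : X) (rad : ℝ), 0 < rad → ∀ x ∈ ball c rad,
      ∀ f : Fin m → X → ℝ,
        (∀ j, Measurable (f j)) →
        (∀ j, ∃ M : ℝ, ∀ y, |f j y| ≤ M) →
        (∀ j, IsBounded (Function.support (f j))) →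
        ((μ (ball c rad))⁻¹ *
            ∫⁻ z in ball c rad,
              ENNReal.ofReal
                (|T (fun j => (ball c (32 * rad)).indicator (f j)) z| ^ δ) ∂μ) ^ (1 / δ)
          ≤ ENNReal.ofReal C * multiMaximalPow μ p₀' f x := by
  classical
  obtain ⟨CT, hCT, hTb⟩ := hT
  have hne : Nonempty (Fin m) := ⟨⟨0, hm⟩⟩
  have hr0 : ∀ j, (0:ℝ) < r j := fun j => lt_of_lt_of_le one_pos (hr j)
  have hsum_pos : 0 < ∑ j, 1 / r j :=
    Finset.sum_pos (fun j _ => one_div_pos.2 (hr0 j)) Finset.univ_nonempty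
  set s : ℝ := (∑ j, 1 / r j)⁻¹ with hs_def
  have hs_pos : 0 < s := inv_pos.2 hsum_pos
  have hδs : δ < s := hδ
  have hp₀'pos : 0 < p₀' := lt_of_lt_of_le (hr0 ⟨0, hm⟩) (hp₀' ⟨0, hm⟩)
  obtain ⟨C₁, hC₁, hn_eq, hdbl⟩ := hRD.doubling
  have hC₁0 : 0 < C₁ := lt_of_lt_of_le one_pos hC₁
  have hCδr : (0:ℝ) < 1 + δ / (s - δ) := by
    have : 0 < δ / (s - δ) := div_pos hδ0 (by linarith)
    linarith
  refine ⟨(1 + δ / (s - δ)) ^ (1/δ) * CT * (C₁ ^ 5) ^ (1/s), by positivity, ?_⟩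
  intro c rad hrad x hx f hfm _ _
  set B : Set X := ball c rad with hB_def
  set B32 : Set X := ball c (32 * rad) with hB32_def
  have hrad32 : 0 < 32 * rad := by linarith
  have hμB0 : μ B ≠ 0 := (hRD.ball_pos c rad hrad).ne'
  have hμBt : μ B ≠ ⊤ := (hRD.ball_lt_top c rad hrad).ne
  have hμ320 : μ B32 ≠ 0 := (hRD.ball_pos c _ hrad32).ne'
  have hμ32t : μ B32 ≠ ⊤ := (hRD.ball_lt_top c _ hrad32).ne
  set g : X → ℝ := T (fun j => B32.indicator (f j)) with hg_def
  set N : ℝ≥0∞ := weakLpNormW μ s (fun _ => 1) g with hN_def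
  have hwk : N = ⨆ (t : ℝ) (_ : 0 < t),
      ENNReal.ofReal t * (μ {y | t < |g y|}) ^ (1/s) := by
    rw [hN_def, weakLpNormW]
    simp only [ENNReal.ofReal_one, setLIntegral_one, one_div]
  have hN : ∀ t : ℝ, 0 < t → ENNReal.ofReal t * (μ {y | t < |g y|}) ^ (1/s) ≤ N := by
    intro t ht
    rw [hwk]
    exact le_iSup₂ (f := fun (t : ℝ) (_ : 0 < t) =>
      ENNReal.ofReal t * (μ {y | t < |g y|}) ^ (1/s)) t ht
  have kol := kolmogorov_aux μ B g δ s hδ0 hδs hμB0 hμBt N hN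
  -- weak type bound on N
  have hTapp : N ≤ ENNReal.ofReal CT *
      ∏ j, lpNormW μ (r j) (fun _ => 1) (B32.indicator (f j)) :=
    hTb (fun j => B32.indicator (f j)) (fun j => (hfm j).indicator measurableSet_ball)
  -- the Lp norm of the truncation
  have hlp : ∀ j, lpNormW μ (r j) (fun _ => 1) (B32.indicator (f j)) =
      (∫⁻ y in B32, ENNReal.ofReal (|f j y| ^ r j) ∂μ) ^ (1 / r j) := by
    intro j
    rw [lpNormW]
    congr 1
    rw [← lintegral_indicator measurableSet_ball]
    congr 1 with y
    by_cases hy : y ∈ B32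
    · simp [hy, Set.indicator_of_mem, show y ∈ ball c (32 * rad) from hy]
    · simp [hy, Set.indicator_of_notMem, Real.zero_rpow (hr0 j).ne', show y ∉ ball c (32 * rad) from hy]
  set A : Fin m → ℝ≥0∞ := fun j =>
    (μ B32)⁻¹ * ∫⁻ y in B32, ENNReal.ofReal |(|f j y|) ^ p₀'| ∂μ with hA_def
  have hIA : ∀ j, (∫⁻ y in B32, ENNReal.ofReal (|f j y| ^ p₀') ∂μ) = μ B32 * A j := by
    intro j
    have habs : (∫⁻ y in B32, ENNReal.ofReal (|f j y| ^ p₀') ∂μ) =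
        ∫⁻ y in B32, ENNReal.ofReal |(|f j y|) ^ p₀'| ∂μ := by
      congr 1 with y
      rw [abs_of_nonneg (Real.rpow_nonneg (abs_nonneg _) _)]
    rw [habs, hA_def, ← mul_assoc, ENNReal.mul_inv_cancel hμ320 hμ32t, one_mul]
  have hstep : ∀ j, lpNormW μ (r j) (fun _ => 1) (B32.indicator (f j)) ≤
      μ B32 ^ (1 / r j) * A j ^ (1 / p₀') := by
    intro j
    rw [hlp j]
    calc (∫⁻ y in B32, ENNReal.ofReal (|f j y| ^ r j) ∂μ) ^ (1 / r j)
        ≤ (∫⁻ y in B32, ENNReal.ofReal (|f j y| ^ p₀') ∂μ) ^ (1 / p₀') *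
            (μ B32) ^ (1 / r j - 1 / p₀') :=
          lp_compare_aux μ B32 (f j) (hfm j) (r j) p₀' (hr0 j) (hp₀' j)
      _ = μ B32 ^ (1 / r j) * A j ^ (1 / p₀') := by
          rw [hIA j, ENNReal.mul_rpow_of_nonneg _ _ (by positivity : (0:ℝ) ≤ 1 / p₀')]
          rw [mul_comm (μ B32 ^ (1/p₀')), mul_assoc, ← ENNReal.rpow_add _ _ hμ320 hμ32t]
          rw [show 1/p₀' + (1/r j - 1/p₀') = 1/r j by ring]
          ring
  have hprod : (∏ j, lpNormW μ (r j) (fun _ => 1) (B32.indicator (f j))) ≤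
      μ B32 ^ (1/s) * (∏ j, A j) ^ (1 / p₀') := by
    calc (∏ j, lpNormW μ (r j) (fun _ => 1) (B32.indicator (f j)))
        ≤ ∏ j, (μ B32 ^ (1 / r j) * A j ^ (1 / p₀')) :=
          Finset.prod_le_prod' fun j _ => hstep j
      _ = (∏ j, μ B32 ^ (1 / r j)) * ∏ j, A j ^ (1 / p₀') := Finset.prod_mul_distrib
      _ = μ B32 ^ (1/s) * (∏ j, A j) ^ (1 / p₀') := by
          rw [← rpow_finset_sum _ hμ320 hμ32t,
            ENNReal.prod_rpow_of_nonneg (by positivity : (0:ℝ) ≤ 1 / p₀')]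
          congr 2
          rw [hs_def, one_div, inv_inv]
  have hx32 : x ∈ ball c (32 * rad) :=
    mem_ball.2 (lt_of_lt_of_le (mem_ball.1 hx) (by linarith))
  have hmax : (∏ j, A j) ≤ multiMaximal μ (fun j y => |f j y| ^ p₀') x := by
    rw [multiMaximal]
    exact le_iSup_of_le c (le_iSup_of_le (32 * rad)
      (le_iSup_of_le hrad32 (le_iSup_of_le hx32 le_rfl)))
  have hdbl32 : μ B32 ≤ ENNReal.ofReal (C₁ ^ 5) * μ B := by
    have h2 := hdbl c (2 * rad) (by linarith)
    have h3 := hdbl c (4 * rad) (by linarith)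
    have h4 := hdbl c (8 * rad) (by linarith)
    have h5 := hdbl c (16 * rad) (by linarith)
    rw [show (2:ℝ) * (2 * rad) = 4 * rad by ring] at h2
    rw [show (2:ℝ) * (4 * rad) = 8 * rad by ring] at h3
    rw [show (2:ℝ) * (8 * rad) = 16 * rad by ring] at h4
    rw [show (2:ℝ) * (16 * rad) = 32 * rad by ring] at h5
    calc μ B32 ≤ ENNReal.ofReal C₁ * μ (ball c (16 * rad)) := h5
      _ ≤ ENNReal.ofReal C₁ * (ENNReal.ofReal C₁ * μ (ball c (8 * rad))) := by gcongr
      _ ≤ ENNReal.ofReal C₁ * (ENNReal.ofReal C₁ *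
            (ENNReal.ofReal C₁ * μ (ball c (4 * rad)))) := by gcongr
      _ ≤ ENNReal.ofReal C₁ * (ENNReal.ofReal C₁ * (ENNReal.ofReal C₁ *
            (ENNReal.ofReal C₁ * μ (ball c (2 * rad))))) := by gcongr
      _ ≤ ENNReal.ofReal C₁ * (ENNReal.ofReal C₁ * (ENNReal.ofReal C₁ *
            (ENNReal.ofReal C₁ * (ENNReal.ofReal C₁ * μ B)))) := by
          gcongr
          exact hdbl c rad hrad
      _ = ENNReal.ofReal (C₁ ^ 5) * μ B := by
          rw [ENNReal.ofReal_pow hC₁0.le]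
          ring
  -- assemble
  rw [multiMaximalPow]
  set M : ℝ≥0∞ := multiMaximal μ (fun j y => |f j y| ^ p₀') x with hM_def
  have hb32e : μ B32 ^ (1/s) ≤ ENNReal.ofReal (C₁ ^ 5) ^ (1/s) * μ B ^ (1/s) := by
    rw [← ENNReal.mul_rpow_of_nonneg _ _ (by positivity : (0:ℝ) ≤ 1/s)]
    exact ENNReal.rpow_le_rpow hdbl32 (by positivity)
  have hPM : (∏ j, A j) ^ (1 / p₀') ≤ M ^ (1 / p₀') :=
    ENNReal.rpow_le_rpow hmax (by positivity)
  calc ((μ B)⁻¹ * ∫⁻ z in B, ENNReal.ofReal (|g z| ^ δ) ∂μ) ^ (1/δ)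
      ≤ ((μ B)⁻¹ * (ENNReal.ofReal (1 + δ / (s - δ)) * N ^ δ * μ B ^ (1 - δ/s))) ^ (1/δ) :=
        ENNReal.rpow_le_rpow (mul_le_mul_right kol _) (by positivity)
    _ = ENNReal.ofReal (1 + δ / (s - δ)) ^ (1/δ) * N * μ B ^ (-(1/s)) := by
        rw [← ENNReal.rpow_neg_one (μ B),
          show (μ B) ^ (-1:ℝ) * (ENNReal.ofReal (1 + δ / (s - δ)) * N ^ δ * μ B ^ (1 - δ/s)) =
            ENNReal.ofReal (1 + δ / (s - δ)) * N ^ δ *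
              ((μ B) ^ (-1:ℝ) * μ B ^ (1 - δ/s)) by ring,
          ← ENNReal.rpow_add _ _ hμB0 hμBt,
          ENNReal.mul_rpow_of_nonneg _ _ (by positivity : (0:ℝ) ≤ 1/δ),
          ENNReal.mul_rpow_of_nonneg _ _ (by positivity : (0:ℝ) ≤ 1/δ),
          ← ENNReal.rpow_mul N, ← ENNReal.rpow_mul (μ B),
          show δ * (1/δ) = 1 by field_simp,
          show (-1 + (1 - δ/s)) * (1/δ) = -(1/s) by field_simp; ring,
          ENNReal.rpow_one]
    _ ≤ ENNReal.ofReal (1 + δ / (s - δ)) ^ (1/δ) *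
          (ENNReal.ofReal CT * (μ B32 ^ (1/s) * (∏ j, A j) ^ (1 / p₀'))) *
          μ B ^ (-(1/s)) :=
        mul_le_mul_left (mul_le_mul_right
          (hTapp.trans (mul_le_mul_right hprod _)) _) _
    _ ≤ ENNReal.ofReal (1 + δ / (s - δ)) ^ (1/δ) *
          (ENNReal.ofReal CT * ((ENNReal.ofReal (C₁ ^ 5) ^ (1/s) * μ B ^ (1/s)) *
            M ^ (1 / p₀'))) * μ B ^ (-(1/s)) :=
        mul_le_mul_left (mul_le_mul_right
          (mul_le_mul_right (mul_le_mul' hb32e hPM) _) _) _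
    _ = (ENNReal.ofReal (1 + δ / (s - δ)) ^ (1/δ) * ENNReal.ofReal CT *
          ENNReal.ofReal (C₁ ^ 5) ^ (1/s)) * M ^ (1 / p₀') *
          (μ B ^ (1/s) * μ B ^ (-(1/s))) := by ring
    _ = (ENNReal.ofReal (1 + δ / (s - δ)) ^ (1/δ) * ENNReal.ofReal CT *
          ENNReal.ofReal (C₁ ^ 5) ^ (1/s)) * M ^ (1 / p₀') := by
        rw [← ENNReal.rpow_add _ _ hμB0 hμBt]
        simp
    _ = ENNReal.ofReal ((1 + δ / (s - δ)) ^ (1/δ) * CT * (C₁ ^ 5) ^ (1/s)) * M ^ (1 / p₀') := by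
        rw [ENNReal.ofReal_mul (by positivity), ENNReal.ofReal_mul (by positivity),
          ← ENNReal.ofReal_rpow_of_pos hCδr, ← ENNReal.ofReal_rpow_of_pos (by positivity)]
end
end

section
/- Let (X,d,μ) be an RD-space with parameters κ≤n and μ(X)=∞, let 0<α≤1, and let T be an m-linear operator bounded from L^{l₁}(X)×⋯×L^{l_m}(X) to L^{q,∞}(X), where 1≤l₁,…,l_m<∞, 1/l=1/l₁+⋯+1/l_m and 0<l/q≤ακ/n, and let p₀' ≥ max{l₁,…,l_m}. Then for every 0<δ<q there exists C>0 such that for every ball B=B(z_B,r_B) with 0<r_B<1/4, setting B̃=B(z_B,r_B^α), for every x∈B and every m-tuple f⃗=(f₁,…,f_m) of bounded measurable functions with bounded support, (μ(B)^{-1}∫_B |T(f₁χ_{16B̃},…,f_mχ_{16B̃})(z)|^δ dμ(z))^{1/δ} ≤ C·r_B^{ακ/l − n/q}·𝓜_{p₀'}(f⃗)(x) ≤ C·𝓜_{p₀'}(f⃗)(x). -/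
open MeasureTheory Metric ENNReal Set Bornology
open scoped BigOperators NNReal ENNReal

noncomputable section

section AuxLemmas

set_option linter.unusedSectionVars false

variable {X : Type*} [MetricSpace X] [MeasurableSpace X] [BorelSpace X]

lemma weak_term_le (μ : Measure X) (q : ℝ) (h : X → ℝ) {t : ℝ} (ht : 0 < t) :
    ENNReal.ofReal t * (μ {y | t < |h y|}) ^ (1 / q) ≤ weakLpNormW μ q (fun _ => 1) h := by
  have h1 : (∫⁻ _ in {y | t < |h y|}, ENNReal.ofReal ((1:ℝ)) ∂μ) = μ {y | t < |h y|} := by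
    simp [setLIntegral_const]
  refine le_iSup₂_of_le t ht ?_
  rw [h1]

lemma kolmogorov {δ q : ℝ} (hδ0 : 0 < δ) (hδq : δ < q) (hq0 : 0 < q) :
    ∃ K : ℝ, 0 < K ∧ ∀ (μ : Measure X) (B : Set X), 0 < μ B → μ B < ⊤ → ∀ h : X → ℝ,
      ((μ B)⁻¹ * ∫⁻ z in B, ENNReal.ofReal (|h z| ^ δ) ∂μ) ^ (1 / δ) ≤
        ENNReal.ofReal K * weakLpNormW μ q (fun _ => 1) h * (μ B) ^ (-(1 / q)) := by
  classical
  set ρ : ℝ := (2:ℝ) ^ (δ - q) with hρ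
  have hρ0 : 0 < ρ := Real.rpow_pos_of_pos two_pos _
  have hρ1 : ρ < 1 := Real.rpow_lt_one_of_one_lt_of_neg one_lt_two (by linarith)
  set K₀ : ℝ := 1 + 2 ^ δ * (1 - ρ)⁻¹ with hK₀
  have h2δ : (0:ℝ) < 2 ^ δ := Real.rpow_pos_of_pos two_pos _
  have hinvρ : (0:ℝ) < (1 - ρ)⁻¹ := by
    have : (0:ℝ) < 1 - ρ := by linarith
    positivity
  have hK₀0 : 0 < K₀ := by rw [hK₀]; positivity
  refine ⟨K₀ ^ (1 / δ), Real.rpow_pos_of_pos hK₀0 _, ?_⟩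
  intro μ B hB0 hBt h
  set W := weakLpNormW μ q (fun _ => 1) h with hWdef
  rcases eq_or_ne W ⊤ with hWtop | hWne
  · have h1 : ENNReal.ofReal (K₀ ^ (1/δ)) ≠ 0 := by
      simp [ENNReal.ofReal_eq_zero, not_le, Real.rpow_pos_of_pos hK₀0]
    have h2 : (μ B) ^ (-(1/q)) ≠ 0 := by
      simp only [ne_eq, ENNReal.rpow_eq_zero_iff, not_or, not_and_or]
      exact ⟨Or.inl hB0.ne', Or.inl hBt.ne⟩
    rw [hWtop, ENNReal.mul_top h1, ENNReal.top_mul h2]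
    exact le_top
  rcases eq_or_ne W 0 with hW0 | hWpos
  · -- |h| = 0 a.e.
    have hS : ∀ t : ℝ, 0 < t → μ {y | t < |h y|} = 0 := by
      intro t ht
      have h3 := weak_term_le μ q h ht
      rw [← hWdef, hW0, le_zero_iff, mul_eq_zero] at h3
      rcases h3 with h' | h'
      · exact absurd h' (by simp [ENNReal.ofReal_eq_zero, not_le, ht])
      · rw [ENNReal.rpow_eq_zero_iff] at h'
        rcases h' with ⟨h', _⟩ | ⟨h', hlt⟩
        · exact h'
        · exact absurd hlt (not_lt.2 (by positivity))
    have hnull : μ {z | 0 < |h z|} = 0 := by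
      have hsub : {z | 0 < |h z|} ⊆ ⋃ n : ℕ, {z | (1:ℝ)/(n+1) < |h z|} := by
        intro z hz
        simp only [Set.mem_setOf_eq] at hz
        obtain ⟨n, hn⟩ := exists_nat_one_div_lt hz
        exact Set.mem_iUnion.2 ⟨n, by exact_mod_cast hn⟩
      exact measure_mono_null hsub (measure_iUnion_null fun n => hS _ (by positivity))
    have hae : ∀ᵐ z ∂μ, ENNReal.ofReal (|h z| ^ δ) = 0 := by
      rw [ae_iff]
      refine measure_mono_null (fun z hz => ?_) hnull
      simp only [Set.mem_setOf_eq] at hz ⊢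
      rcases (abs_nonneg (h z)).lt_or_eq with hlt | heq
      · exact hlt
      · exact absurd (by simp [← heq, Real.zero_rpow hδ0.ne']) hz
    have hzero : ∫⁻ z in B, ENNReal.ofReal (|h z| ^ δ) ∂μ = 0 := by
      rw [lintegral_congr_ae (ae_restrict_of_ae hae)]
      simp
    rw [hzero, mul_zero, ENNReal.zero_rpow_of_pos (by positivity)]
    exact zero_le
  · -- main case : 0 < W < ⊤
    set w₀ : ℝ := W.toReal with hw₀def
    have hw₀ : 0 < w₀ := ENNReal.toReal_pos hWpos hWne
    have hWeq : W = ENNReal.ofReal w₀ := (ENNReal.ofReal_toReal hWne).symm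
    set b₀ : ℝ := (μ B).toReal with hb₀def
    have hb₀ : 0 < b₀ := ENNReal.toReal_pos hB0.ne' hBt.ne
    have hBeq : μ B = ENNReal.ofReal b₀ := (ENNReal.ofReal_toReal hBt.ne).symm
    set l₀ : ℝ := w₀ * b₀ ^ (-(1/q)) with hl₀def
    have hl₀ : 0 < l₀ := by
      have : (0:ℝ) < b₀ ^ (-(1/q)) := Real.rpow_pos_of_pos hb₀ _
      positivity
    set S : ℕ → Set X := fun k => {z | 2 ^ k * l₀ < |h z|} with hSdef
    set T : ℕ → Set X := fun k => toMeasurable μ (S k) with hTdef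
    -- measure of level sets
    have hμS : ∀ k : ℕ, μ (S k) ≤ ENNReal.ofReal ((w₀ / (2 ^ k * l₀)) ^ q) := by
      intro k
      have ht : (0:ℝ) < 2 ^ k * l₀ := by positivity
      have h1 := weak_term_le μ q h ht
      rw [← hWdef, hWeq] at h1
      have h2 : (μ (S k)) ^ (1/q) ≤ ENNReal.ofReal (w₀ / (2 ^ k * l₀)) := by
        rw [ENNReal.ofReal_div_of_pos ht, ENNReal.le_div_iff_mul_le
          (Or.inl (by simp [ENNReal.ofReal_eq_zero, not_le, ht, hl₀])) (Or.inl ENNReal.ofReal_ne_top),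
          mul_comm]
        exact h1
      calc μ (S k) = ((μ (S k)) ^ (1/q)) ^ q := by
            rw [← ENNReal.rpow_mul, one_div, inv_mul_cancel₀ hq0.ne', ENNReal.rpow_one]
        _ ≤ (ENNReal.ofReal (w₀ / (2 ^ k * l₀))) ^ q := ENNReal.rpow_le_rpow h2 hq0.le
        _ = ENNReal.ofReal ((w₀ / (2 ^ k * l₀)) ^ q) :=
            ENNReal.ofReal_rpow_of_nonneg (by positivity) hq0.le
    -- pointwise bound
    have hpt : ∀ z, ENNReal.ofReal (|h z| ^ δ) ≤ ENNReal.ofReal (l₀ ^ δ) +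
        ∑' k : ℕ, (T k).indicator (fun _ => ENNReal.ofReal ((2 ^ (k+1) * l₀) ^ δ)) z := by
      intro z
      by_cases hz : |h z| ≤ l₀
      · exact le_trans (ENNReal.ofReal_le_ofReal
          (Real.rpow_le_rpow (abs_nonneg _) hz hδ0.le)) le_self_add
      · push_neg at hz
        have hex : ∃ k : ℕ, |h z| ≤ 2 ^ (k+1) * l₀ := by
          obtain ⟨n, hn⟩ := exists_nat_gt (|h z| / l₀)
          refine ⟨n, ?_⟩
          have h2n : (n:ℝ) ≤ 2 ^ (n+1) := by
            calc (n:ℝ) ≤ 2 ^ n := by exact_mod_cast (Nat.lt_two_pow_self (n := n)).le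
              _ ≤ 2 ^ (n+1) := by
                  have := pow_le_pow_right₀ (one_le_two (α := ℝ)) (Nat.le_succ n)
                  exact this
          have := (div_le_iff₀ hl₀).mp (hn.le.trans h2n)
          linarith
        set k := Nat.find hex with hkdef
        have hk1 : |h z| ≤ 2 ^ (k+1) * l₀ := Nat.find_spec hex
        have hk2 : 2 ^ k * l₀ < |h z| := by
          rcases Nat.eq_zero_or_pos k with h0 | h0
          · rw [h0]; simpa using hz
          · have hmin := Nat.find_min hex (show k - 1 < k from Nat.sub_lt h0 one_pos)
            push_neg at hmin
            have : k - 1 + 1 = k := Nat.succ_pred_eq_of_pos h0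
            rwa [this] at hmin
        have hmem : z ∈ T k := subset_toMeasurable μ (S k) hk2
        calc ENNReal.ofReal (|h z| ^ δ) ≤ ENNReal.ofReal ((2 ^ (k+1) * l₀) ^ δ) :=
              ENNReal.ofReal_le_ofReal (Real.rpow_le_rpow (abs_nonneg _) hk1 hδ0.le)
          _ = (T k).indicator (fun _ => ENNReal.ofReal ((2 ^ (k+1) * l₀) ^ δ)) z := by
              rw [Set.indicator_of_mem hmem]
          _ ≤ ∑' k : ℕ, (T k).indicator (fun _ => ENNReal.ofReal ((2 ^ (k+1) * l₀) ^ δ)) z :=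
              ENNReal.le_tsum k
          _ ≤ _ := le_add_self
    -- integral bound
    have hmeasInd : ∀ k : ℕ, Measurable
        ((T k).indicator (fun _ : X => ENNReal.ofReal ((2 ^ (k+1) * l₀) ^ δ))) :=
      fun k => measurable_const.indicator (measurableSet_toMeasurable μ _)
    have hint : ∫⁻ z in B, ENNReal.ofReal (|h z| ^ δ) ∂μ ≤
        ENNReal.ofReal (l₀ ^ δ) * μ B +
          ∑' k : ℕ, ENNReal.ofReal ((2 ^ (k+1) * l₀) ^ δ) * μ (S k) := by
      calc ∫⁻ z in B, ENNReal.ofReal (|h z| ^ δ) ∂μ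
          ≤ ∫⁻ z in B, (ENNReal.ofReal (l₀ ^ δ) +
              ∑' k : ℕ, (T k).indicator (fun _ => ENNReal.ofReal ((2 ^ (k+1) * l₀) ^ δ)) z) ∂μ :=
            lintegral_mono hpt
        _ = ENNReal.ofReal (l₀ ^ δ) * μ B + ∫⁻ z in B,
              (∑' k : ℕ, (T k).indicator (fun _ => ENNReal.ofReal ((2 ^ (k+1) * l₀) ^ δ)) z) ∂μ := by
            rw [lintegral_add_left measurable_const, lintegral_const,
              Measure.restrict_apply_univ]
        _ = ENNReal.ofReal (l₀ ^ δ) * μ B + ∑' k : ℕ, ∫⁻ z in B,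
              (T k).indicator (fun _ => ENNReal.ofReal ((2 ^ (k+1) * l₀) ^ δ)) z ∂μ := by
            rw [lintegral_tsum fun k => (hmeasInd k).aemeasurable]
        _ ≤ _ := by
            refine add_le_add_right (ENNReal.tsum_le_tsum fun k => ?_) _
            rw [lintegral_indicator_const (measurableSet_toMeasurable μ _)]
            refine mul_le_mul_right ?_ _
            calc (μ.restrict B) (T k) ≤ μ (T k) := by
                  rw [Measure.restrict_apply (measurableSet_toMeasurable μ _)]
                  exact measure_mono Set.inter_subset_left
              _ = μ (S k) := measure_toMeasurable _
    -- sum the geometric series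
    have hterm : ∀ k : ℕ, ((2:ℝ) ^ (k+1) * l₀) ^ δ * (w₀ / (2 ^ k * l₀)) ^ q
        = 2 ^ δ * w₀ ^ q * l₀ ^ (δ - q) * ρ ^ k := by
      intro k
      have h2k : (0:ℝ) < 2 ^ k := by positivity
      have A1 : ((2:ℝ) ^ (k+1) * l₀) ^ δ = 2 ^ (((k:ℝ)+1)*δ) * l₀ ^ δ := by
        rw [Real.mul_rpow (by positivity) hl₀.le, ← Real.rpow_natCast 2 (k+1),
          ← Real.rpow_mul two_pos.le]
        push_cast
        try ring_nf
      have A2 : (w₀ / ((2:ℝ) ^ k * l₀)) ^ q = w₀ ^ q * ((2:ℝ) ^ (-((k:ℝ)*q)) * l₀ ^ (-q)) := by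
        rw [Real.div_rpow hw₀.le (by positivity), Real.mul_rpow h2k.le hl₀.le,
          ← Real.rpow_natCast 2 k, ← Real.rpow_mul two_pos.le,
          Real.rpow_neg two_pos.le, Real.rpow_neg hl₀.le, div_eq_mul_inv, mul_inv]
        try ring
      have A3 : ρ ^ k = (2:ℝ) ^ ((δ-q)*(k:ℝ)) := by
        rw [hρ, ← Real.rpow_natCast ((2:ℝ) ^ (δ - q)) k, ← Real.rpow_mul two_pos.le]
      have A4 : l₀ ^ (δ - q) = l₀ ^ δ * l₀ ^ (-q) := by
        rw [← Real.rpow_add hl₀, show δ + -q = δ - q from by ring]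
      have A5 : (2:ℝ) ^ (((k:ℝ)+1)*δ) * 2 ^ (-((k:ℝ)*q)) = 2 ^ δ * 2 ^ ((δ-q)*(k:ℝ)) := by
        rw [← Real.rpow_add two_pos, ← Real.rpow_add two_pos,
          show ((k:ℝ)+1)*δ + -((k:ℝ)*q) = δ + (δ-q)*(k:ℝ) from by ring]
      calc ((2:ℝ) ^ (k+1) * l₀) ^ δ * (w₀ / (2 ^ k * l₀)) ^ q
          = (2 ^ (((k:ℝ)+1)*δ) * 2 ^ (-((k:ℝ)*q))) * w₀ ^ q * (l₀ ^ δ * l₀ ^ (-q)) := by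
            rw [A1, A2]
            ring
        _ = 2 ^ δ * w₀ ^ q * l₀ ^ (δ - q) * ρ ^ k := by
            rw [A5, A4, A3]
            ring
    have hsum : ∑' k : ℕ, ENNReal.ofReal ((2 ^ (k+1) * l₀) ^ δ) * μ (S k) ≤
        ENNReal.ofReal (w₀ ^ δ * b₀ ^ (1 - δ/q) * (2 ^ δ * (1 - ρ)⁻¹)) := by
      have hkey : 2 ^ δ * w₀ ^ q * l₀ ^ (δ - q) * (1 - ρ)⁻¹
          = w₀ ^ δ * b₀ ^ (1 - δ/q) * (2 ^ δ * (1 - ρ)⁻¹) := by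
        have hl₀pow : l₀ ^ (δ - q) = w₀ ^ (δ - q) * b₀ ^ (1 - δ/q) := by
          rw [hl₀def, Real.mul_rpow hw₀.le (Real.rpow_pos_of_pos hb₀ _).le,
            ← Real.rpow_mul hb₀.le]
          rw [show -(1/q)*(δ-q) = 1 - δ/q from by field_simp <;> ring]
        have hw₀pow : w₀ ^ q * w₀ ^ (δ - q) = w₀ ^ δ := by
          rw [← Real.rpow_add hw₀]
          congr 1
          ring
        rw [hl₀pow, ← hw₀pow]
        ring
      calc ∑' k : ℕ, ENNReal.ofReal ((2 ^ (k+1) * l₀) ^ δ) * μ (S k)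
          ≤ ∑' k : ℕ, ENNReal.ofReal ((2 ^ (k+1) * l₀) ^ δ) *
              ENNReal.ofReal ((w₀ / (2 ^ k * l₀)) ^ q) :=
            ENNReal.tsum_le_tsum fun k => mul_le_mul_right (hμS k) _
        _ = ∑' k : ℕ, ENNReal.ofReal (2 ^ δ * w₀ ^ q * l₀ ^ (δ - q)) * (ENNReal.ofReal ρ) ^ k := by
            congr 1
            funext k
            rw [← ENNReal.ofReal_mul (by positivity), hterm k,
              ENNReal.ofReal_mul (by positivity), ENNReal.ofReal_pow hρ0.le]
        _ = ENNReal.ofReal (2 ^ δ * w₀ ^ q * l₀ ^ (δ - q)) * (1 - ENNReal.ofReal ρ)⁻¹ := by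
            rw [ENNReal.tsum_mul_left, ENNReal.tsum_geometric]
        _ = ENNReal.ofReal (2 ^ δ * w₀ ^ q * l₀ ^ (δ - q) * (1 - ρ)⁻¹) := by
            rw [show (1:ℝ≥0∞) - ENNReal.ofReal ρ = ENNReal.ofReal (1 - ρ) by
                rw [ENNReal.ofReal_sub _ hρ0.le, ENNReal.ofReal_one],
              ← ENNReal.ofReal_inv_of_pos (by linarith), ← ENNReal.ofReal_mul (by positivity)]
        _ = _ := by rw [hkey]
    have htotal : ∫⁻ z in B, ENNReal.ofReal (|h z| ^ δ) ∂μ ≤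
        ENNReal.ofReal (w₀ ^ δ * b₀ ^ (1 - δ/q) * K₀) := by
      refine hint.trans ?_
      have h1 : ENNReal.ofReal (l₀ ^ δ) * μ B = ENNReal.ofReal (w₀ ^ δ * b₀ ^ (1 - δ/q)) := by
        rw [hBeq, ← ENNReal.ofReal_mul (by positivity)]
        congr 1
        rw [hl₀def, Real.mul_rpow hw₀.le (Real.rpow_pos_of_pos hb₀ _).le,
          ← Real.rpow_mul hb₀.le]
        rw [show b₀ ^ (1 - δ/q) = b₀ ^ (-(1/q)*δ) * b₀ by
          rw [← Real.rpow_add_one hb₀.ne']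
          congr 1
          ring]
        ring
      rw [h1]
      refine le_trans (add_le_add_right hsum _) ?_
      rw [← ENNReal.ofReal_add (by positivity) (by positivity)]
      refine ENNReal.ofReal_le_ofReal (le_of_eq ?_)
      rw [hK₀]
      ring
    -- conclude
    have hrealkey : (b₀⁻¹ * (w₀ ^ δ * b₀ ^ (1 - δ/q) * K₀)) ^ (1/δ)
        = K₀ ^ (1/δ) * (w₀ * b₀ ^ (-(1/q))) := by
      have e1 : b₀⁻¹ * (w₀ ^ δ * b₀ ^ (1 - δ/q) * K₀) = w₀ ^ δ * b₀ ^ (-(δ/q)) * K₀ := by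
        rw [show (b₀:ℝ)⁻¹ = b₀ ^ (-1 : ℝ) from (Real.rpow_neg_one b₀).symm,
          show b₀ ^ (-(δ/q)) = b₀ ^ (-1 : ℝ) * b₀ ^ (1 - δ/q) by
            rw [← Real.rpow_add hb₀]
            congr 1
            ring]
        ring
      rw [e1, Real.mul_rpow (by positivity) hK₀0.le,
        Real.mul_rpow (by positivity) (Real.rpow_pos_of_pos hb₀ _).le,
        ← Real.rpow_mul hw₀.le, ← Real.rpow_mul hb₀.le,
        mul_one_div_cancel hδ0.ne', Real.rpow_one]
      rw [show -(δ/q) * (1/δ) = -(1/q) from by field_simp <;> ring]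
      ring
    calc ((μ B)⁻¹ * ∫⁻ z in B, ENNReal.ofReal (|h z| ^ δ) ∂μ) ^ (1/δ)
        ≤ ((μ B)⁻¹ * ENNReal.ofReal (w₀ ^ δ * b₀ ^ (1 - δ/q) * K₀)) ^ (1/δ) :=
          ENNReal.rpow_le_rpow (mul_le_mul_right htotal _) (by positivity)
      _ = ENNReal.ofReal ((b₀⁻¹ * (w₀ ^ δ * b₀ ^ (1 - δ/q) * K₀)) ^ (1/δ)) := by
          rw [hBeq, ← ENNReal.ofReal_inv_of_pos hb₀, ← ENNReal.ofReal_mul (by positivity),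
            ENNReal.ofReal_rpow_of_pos (by positivity)]
      _ = ENNReal.ofReal (K₀ ^ (1/δ) * (w₀ * b₀ ^ (-(1/q)))) := by rw [hrealkey]
      _ = ENNReal.ofReal (K₀ ^ (1/δ)) * W * (μ B) ^ (-(1/q)) := by
          rw [ENNReal.ofReal_mul (Real.rpow_pos_of_pos hK₀0 _).le,
            ENNReal.ofReal_mul hw₀.le, hWeq, hBeq,
            ENNReal.ofReal_rpow_of_pos hb₀, mul_assoc]

lemma holder_avg (μ : Measure X) (B' : Set X) (h0 : μ B' ≠ 0) (ht : μ B' ≠ ⊤)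
    (G : X → ℝ≥0∞) (hG : Measurable G) {a b : ℝ} (ha : 0 < a) (hab : a ≤ b) :
    (∫⁻ y in B', G y ^ a ∂μ) ^ (1/a) ≤
      (μ B') ^ (1/a) * ((μ B')⁻¹ * ∫⁻ y in B', G y ^ b ∂μ) ^ (1/b) := by
  have hb : 0 < b := lt_of_lt_of_le ha hab
  rcases eq_or_lt_of_le hab with rfl | hlt
  · rw [← ENNReal.mul_rpow_of_nonneg _ _ (by positivity : (0:ℝ) ≤ 1/a), ← mul_assoc,
      ENNReal.mul_inv_cancel h0 ht, one_mul]
  · set p := b / a with hp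
    have hp1 : 1 < p := (one_lt_div ha).2 hlt
    have hpq := Real.HolderConjugate.conjExponent hp1
    set p' := Real.conjExponent p with hp'
    have hH := ENNReal.lintegral_mul_le_Lp_mul_Lq (μ.restrict B') hpq
      (f := fun y => G y ^ a) (g := fun _ => (1:ℝ≥0∞))
      (hG.pow_const a).aemeasurable aemeasurable_const
    have hpinv : p⁻¹ = a / b := by rw [hp, inv_div]
    have hp'inv : p'⁻¹ = 1 - a/b := by
      have h1 := hpq.inv_add_inv_eq_inv
      rw [hpinv, inv_one] at h1
      linarith
    have he : 1/p' * (1/a) = 1/a - 1/b := by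
      rw [one_div, hp'inv]
      field_simp
    calc (∫⁻ y in B', G y ^ a ∂μ) ^ (1/a)
        ≤ ((∫⁻ y in B', G y ^ b ∂μ) ^ (1/p) * (μ B') ^ (1/p')) ^ (1/a) := by
          refine ENNReal.rpow_le_rpow ?_ (by positivity)
          calc ∫⁻ y in B', G y ^ a ∂μ
              = ∫⁻ y in B', (((fun y => G y ^ a) * (fun _ => (1:ℝ≥0∞))) : X → ℝ≥0∞) y ∂μ := by
                simp only [Pi.mul_apply, mul_one]
            _ ≤ (∫⁻ y in B', (G y ^ a) ^ p ∂μ) ^ (1/p) *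
                  (∫⁻ y in B', (1:ℝ≥0∞) ^ p' ∂μ) ^ (1/p') := hH
            _ = (∫⁻ y in B', G y ^ b ∂μ) ^ (1/p) * (μ B') ^ (1/p') := by
                simp_rw [← ENNReal.rpow_mul,
                  show a * p = b from by rw [hp]; field_simp <;> ring, ENNReal.one_rpow]
                rw [setLIntegral_one]
      _ = (∫⁻ y in B', G y ^ b ∂μ) ^ (1/b) * (μ B') ^ (1/a - 1/b) := by
          rw [ENNReal.mul_rpow_of_nonneg _ _ (by positivity : (0:ℝ) ≤ 1/a),
            ← ENNReal.rpow_mul, ← ENNReal.rpow_mul,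
            show 1/p * (1/a) = 1/b from by rw [hp]; field_simp <;> ring, he]
      _ = (μ B') ^ (1/a) * ((μ B')⁻¹ * ∫⁻ y in B', G y ^ b ∂μ) ^ (1/b) := by
          rw [ENNReal.mul_rpow_of_nonneg _ _ (by positivity : (0:ℝ) ≤ 1/b),
            ENNReal.inv_rpow, ← ENNReal.rpow_neg, ← mul_assoc,
            ← ENNReal.rpow_add _ _ h0 ht,
            show 1/a + -(1/b) = 1/a - 1/b from by ring]
          exact mul_comm _ _

lemma ennreal_rpow_sum {ι : Type*} (x : ℝ≥0∞) (hx0 : x ≠ 0) (hxt : x ≠ ⊤)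
    (s : Finset ι) (c : ι → ℝ) :
    x ^ (∑ i ∈ s, c i) = ∏ i ∈ s, x ^ c i := by
  classical
  induction s using Finset.induction with
  | empty => simp
  | insert _ _ hnot ih =>
      rw [Finset.sum_insert hnot, Finset.prod_insert hnot,
        ENNReal.rpow_add _ _ hx0 hxt, ih]

lemma doubling_iter (μ : Measure X) (C₁ : ℝ) (hC₁ : 0 ≤ C₁)
    (hd : ∀ (x : X) (r : ℝ), 0 < r → μ (ball x (2*r)) ≤ ENNReal.ofReal C₁ * μ (ball x r))
    (x : X) (r : ℝ) (hr : 0 < r) :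
    ∀ N : ℕ, μ (ball x (2^N * r)) ≤ ENNReal.ofReal (C₁^N) * μ (ball x r) := by
  intro N
  induction N with
  | zero => simp
  | succ k ih =>
      have h1 : (2:ℝ)^(k+1) * r = 2 * (2^k * r) := by ring
      rw [h1]
      calc μ (ball x (2 * (2^k * r)))
          ≤ ENNReal.ofReal C₁ * μ (ball x (2^k * r)) := hd x _ (by positivity)
        _ ≤ ENNReal.ofReal C₁ * (ENNReal.ofReal (C₁^k) * μ (ball x r)) := mul_le_mul_right ih _
        _ = ENNReal.ofReal (C₁^(k+1)) * μ (ball x r) := by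
            rw [← mul_assoc, ← ENNReal.ofReal_mul hC₁]
            congr 2
            rw [pow_succ]
            ring

lemma geom_bound (μ : Measure X) (κ n : ℝ) (hRD : IsRDSpace μ κ n) (hΦ : HasMeasureFunction μ)
    (hn : 0 < n) (α : ℝ) (hα0 : 0 < α) (hα1 : α ≤ 1) (q Sg : ℝ) (hq : 0 < q)
    (hSg : 0 < Sg) (hqSg : 1/q ≤ Sg) :
    ∃ D : ℝ, 0 < D ∧ ∀ (zB : X) (rB : ℝ), 0 < rB → rB < 1/4 →
      (μ (ball zB rB)) ^ (-(1/q)) * (μ (ball zB (16 * rB ^ α))) ^ Sg ≤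
        ENNReal.ofReal (D * rB ^ (α * κ * Sg - n / q)) := by
  obtain ⟨C₁, hC₁1, hnlog, hdbl⟩ := hRD.doubling
  obtain ⟨C₂, hC₂0, hC₂1, hrev⟩ := hRD.reverse_doubling
  obtain ⟨Φ, hΦpos, hΦmono, c₁, c₂, hc₁, hc₂, hcmp⟩ := hΦ
  have hC₁0 : (0:ℝ) < C₁ := lt_of_lt_of_le one_pos hC₁1
  have hC₁eq : (2:ℝ) ^ n = C₁ := by
    rw [hnlog]; exact Real.rpow_logb two_pos (by norm_num) hC₁0
  have hΦ1 : 0 < Φ 1 := hΦpos 1 one_pos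
  have h2n : (0:ℝ) < (2:ℝ) ^ n := Real.rpow_pos_of_pos two_pos _
  refine ⟨((2:ℝ)^n) ^ (1/q) * (C₁^4 * C₂⁻¹) ^ Sg * (c₂ * Φ 1) ^ (Sg - 1/q), by positivity, ?_⟩
  intro zB rB hr0 hr14
  set s := rB ^ α with hs
  have hs0 : 0 < s := Real.rpow_pos_of_pos hr0 _
  have hs1 : s < 1 := Real.rpow_lt_one hr0.le (by linarith) hα0
  set V := μ (ball zB 1) with hV
  have hV0 : V ≠ 0 := (hRD.ball_pos zB 1 one_pos).ne'
  have hVt : V ≠ ⊤ := (hRD.ball_lt_top zB 1 one_pos).ne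
  set M := μ (ball zB rB) with hM
  have hM0 : M ≠ 0 := (hRD.ball_pos zB rB hr0).ne'
  have hMt : M ≠ ⊤ := (hRD.ball_lt_top zB rB hr0).ne
  -- upper bound for the big ball
  have hsmall : μ (ball zB s) ≤ ENNReal.ofReal (C₂⁻¹ * s ^ κ) * V := by
    have hss : s * s⁻¹ = 1 := mul_inv_cancel₀ hs0.ne'
    have h1s : (1:ℝ) ≤ s⁻¹ := by nlinarith [hss, hs0, hs1]
    have hrev1 := hrev zB s s⁻¹ hs0 h1s
    rw [inv_mul_cancel₀ hs0.ne'] at hrev1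
    have hcpos : (0:ℝ) < C₂ * s⁻¹ ^ κ := by
      have := Real.rpow_pos_of_pos (show (0:ℝ) < s⁻¹ by positivity) κ
      positivity
    have hkey : μ (ball zB s) ≤ (ENNReal.ofReal (C₂ * s⁻¹ ^ κ))⁻¹ * V := by
      rw [← one_mul (μ (ball zB s)),
        ← ENNReal.inv_mul_cancel (a := ENNReal.ofReal (C₂ * s⁻¹ ^ κ))
          (by simp [ENNReal.ofReal_eq_zero, not_le, hcpos]) ENNReal.ofReal_ne_top,
        mul_assoc]
      exact mul_le_mul_right hrev1 _
    rwa [← ENNReal.ofReal_inv_of_pos hcpos,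
      show (C₂ * s⁻¹ ^ κ)⁻¹ = C₂⁻¹ * s ^ κ by
        rw [Real.inv_rpow hs0.le, mul_inv, inv_inv]] at hkey
  have ha : μ (ball zB (16 * s)) ≤ ENNReal.ofReal (C₁^4 * (C₂⁻¹ * s ^ κ)) * V := by
    have h16 : (16:ℝ) * s = 2^(4:ℕ) * s := by norm_num
    rw [h16]
    calc μ (ball zB (2^(4:ℕ) * s)) ≤ ENNReal.ofReal (C₁^4) * μ (ball zB s) :=
          doubling_iter μ C₁ hC₁0.le hdbl zB s hs0 4
      _ ≤ ENNReal.ofReal (C₁^4) * (ENNReal.ofReal (C₂⁻¹ * s ^ κ) * V) :=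
          mul_le_mul_right hsmall _
      _ = ENNReal.ofReal (C₁^4 * (C₂⁻¹ * s ^ κ)) * V := by
          rw [← mul_assoc, ← ENNReal.ofReal_mul (by positivity)]
  -- lower bound for the small ball
  have hrinv1 : (1:ℝ) ≤ rB⁻¹ := by
    have hss : rB * rB⁻¹ = 1 := mul_inv_cancel₀ hr0.ne'
    nlinarith [hss, hr0, hr14]
  have hlogb0 : 0 ≤ Real.logb 2 rB⁻¹ := Real.logb_nonneg one_lt_two hrinv1
  set N : ℕ := ⌈Real.logb 2 rB⁻¹⌉₊ with hN
  have h2N : rB⁻¹ ≤ (2:ℝ)^N := by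
    calc rB⁻¹ = 2 ^ Real.logb 2 rB⁻¹ :=
          (Real.rpow_logb two_pos (by norm_num) (by positivity)).symm
      _ ≤ 2 ^ ((N:ℕ):ℝ) := Real.rpow_le_rpow_of_exponent_le one_le_two (Nat.le_ceil _)
      _ = 2 ^ (N:ℕ) := Real.rpow_natCast 2 N
  have h2N' : (2:ℝ)^N ≤ 2 * rB⁻¹ := by
    calc (2:ℝ)^N = 2 ^ ((N:ℕ):ℝ) := (Real.rpow_natCast 2 N).symm
      _ ≤ 2 ^ (Real.logb 2 rB⁻¹ + 1) :=
          Real.rpow_le_rpow_of_exponent_le one_le_two (Nat.ceil_lt_add_one hlogb0).le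
      _ = 2 ^ Real.logb 2 rB⁻¹ * 2 := by rw [Real.rpow_add two_pos, Real.rpow_one]
      _ = 2 * rB⁻¹ := by
          rw [Real.rpow_logb two_pos (by norm_num) (by positivity)]
          ring
  have hc1 : V ≤ ENNReal.ofReal ((2:ℝ)^n * rB^(-n)) * M := by
    have h1le : (1:ℝ) ≤ 2^N * rB := by
      have := mul_le_mul_of_nonneg_right h2N hr0.le
      rwa [inv_mul_cancel₀ hr0.ne'] at this
    have hmono : V ≤ μ (ball zB (2^N * rB)) := measure_mono (ball_subset_ball h1le)
    refine hmono.trans ((doubling_iter μ C₁ hC₁0.le hdbl zB rB hr0 N).trans ?_)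
    refine mul_le_mul_left (ENNReal.ofReal_le_ofReal ?_) _
    calc C₁^N = ((2:ℝ)^n)^N := by rw [hC₁eq]
      _ = ((2:ℝ)^(N:ℕ)) ^ n := by
          rw [← Real.rpow_natCast ((2:ℝ)^n) N, ← Real.rpow_mul two_pos.le, mul_comm,
            Real.rpow_mul two_pos.le, Real.rpow_natCast]
      _ ≤ (2 * rB⁻¹) ^ n := Real.rpow_le_rpow (by positivity) h2N' hn.le
      _ = 2^n * rB^(-n) := by
          rw [Real.mul_rpow (by norm_num) (by positivity), Real.inv_rpow hr0.le,
            ← Real.rpow_neg hr0.le]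
  have hMinv : M⁻¹ ≤ ENNReal.ofReal ((2:ℝ)^n * rB^(-n)) * V⁻¹ := by
    calc M⁻¹ = V * V⁻¹ * M⁻¹ := by rw [ENNReal.mul_inv_cancel hV0 hVt, one_mul]
      _ ≤ (ENNReal.ofReal ((2:ℝ)^n * rB^(-n)) * M) * V⁻¹ * M⁻¹ :=
          mul_le_mul_left (mul_le_mul_left hc1 _) _
      _ = ENNReal.ofReal ((2:ℝ)^n * rB^(-n)) * V⁻¹ * (M * M⁻¹) := by ring
      _ = ENNReal.ofReal ((2:ℝ)^n * rB^(-n)) * V⁻¹ := by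
          rw [ENNReal.mul_inv_cancel hM0 hMt, mul_one]
  -- combine
  calc M ^ (-(1/q)) * (μ (ball zB (16 * s))) ^ Sg
      ≤ (ENNReal.ofReal ((2:ℝ)^n * rB^(-n)) * V⁻¹) ^ (1/q) *
          (ENNReal.ofReal (C₁^4 * (C₂⁻¹ * s ^ κ)) * V) ^ Sg := by
        refine mul_le_mul' ?_ (ENNReal.rpow_le_rpow ha hSg.le)
        rw [ENNReal.rpow_neg, ← ENNReal.inv_rpow]
        exact ENNReal.rpow_le_rpow hMinv (by positivity)
    _ = ENNReal.ofReal (((2:ℝ)^n * rB^(-n)) ^ (1/q)) *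
          ENNReal.ofReal ((C₁^4 * (C₂⁻¹ * s ^ κ)) ^ Sg) * ((V⁻¹) ^ (1/q) * V ^ Sg) := by
        rw [ENNReal.mul_rpow_of_nonneg _ _ (by positivity : (0:ℝ) ≤ 1/q),
          ENNReal.mul_rpow_of_nonneg _ _ hSg.le,
          ENNReal.ofReal_rpow_of_pos (by positivity),
          ENNReal.ofReal_rpow_of_pos (by positivity)]
        ring
    _ = ENNReal.ofReal (((2:ℝ)^n * rB^(-n)) ^ (1/q)) *
          ENNReal.ofReal ((C₁^4 * (C₂⁻¹ * s ^ κ)) ^ Sg) * V ^ (Sg - 1/q) := by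
        rw [ENNReal.inv_rpow, ← ENNReal.rpow_neg, ← ENNReal.rpow_add _ _ hV0 hVt,
          show -(1/q) + Sg = Sg - 1/q from by ring]
    _ ≤ ENNReal.ofReal (((2:ℝ)^n * rB^(-n)) ^ (1/q)) *
          ENNReal.ofReal ((C₁^4 * (C₂⁻¹ * s ^ κ)) ^ Sg) *
          ENNReal.ofReal ((c₂ * Φ 1) ^ (Sg - 1/q)) := by
        refine mul_le_mul_right ?_ _
        calc V ^ (Sg - 1/q) ≤ (ENNReal.ofReal (c₂ * Φ 1)) ^ (Sg - 1/q) :=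
              ENNReal.rpow_le_rpow (hcmp zB 1 one_pos).2 (by linarith)
          _ = ENNReal.ofReal ((c₂ * Φ 1) ^ (Sg - 1/q)) :=
              ENNReal.ofReal_rpow_of_pos (by positivity)
    _ = ENNReal.ofReal (((2:ℝ)^n) ^ (1/q) * (C₁^4 * C₂⁻¹) ^ Sg * (c₂ * Φ 1) ^ (Sg - 1/q) *
          rB ^ (α * κ * Sg - n / q)) := by
        rw [← ENNReal.ofReal_mul (by positivity), ← ENNReal.ofReal_mul (by positivity)]
        congr 1
        have e1 : ((2:ℝ)^n * rB^(-n)) ^ (1/q) = ((2:ℝ)^n) ^ (1/q) * rB ^ (-(n/q)) := by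
          rw [Real.mul_rpow h2n.le (by positivity), ← Real.rpow_mul hr0.le,
            show -n * (1/q) = -(n/q) from by ring]
        have e2 : (C₁^4 * (C₂⁻¹ * s ^ κ)) ^ Sg = (C₁^4 * C₂⁻¹) ^ Sg * rB ^ (α * κ * Sg) := by
          rw [hs, ← Real.rpow_mul hr0.le, ← mul_assoc,
            Real.mul_rpow (by positivity) (by positivity), ← Real.rpow_mul hr0.le]
        have e3 : rB ^ (α * κ * Sg) * rB ^ (-(n/q)) = rB ^ (α * κ * Sg - n / q) := by
          rw [← Real.rpow_add hr0, show α * κ * Sg + -(n/q) = α * κ * Sg - n / q from by ring]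
        rw [e1, e2, ← e3]
        ring

end AuxLemmas


/-- Local estimate for the "good" part (case 2 of the proof of Theorem 2.1):
if the `m`-linear operator `T` is bounded from `L^{l₁}×⋯×L^{l_m}` to `L^{q,∞}`
with `0 < l/q ≤ ακ/n`, `p₀' ≥ max l_j` and `0 < δ < q`, then for any ball
`B = B(z_B, r_B)` with `0 < r_B < 1/4`, setting `B̃ = B(z_B, r_B^α)`, and any
`x ∈ B`,
`(μ(B)⁻¹ ∫_B |T(f₁χ_{16B̃},…,f_mχ_{16B̃})|^δ dμ)^{1/δ}
  ≤ C r_B^{ακ/l − n/q} 𝓜_{p₀'}(f⃗)(x) ≤ C 𝓜_{p₀'}(f⃗)(x)`. -/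
theorem local_estimate_weak_q
    {X : Type*} [MetricSpace X] [MeasurableSpace X] [BorelSpace X]
    (μ : Measure X) (κ n : ℝ) (hRD : IsRDSpace μ κ n) (hΦ : HasMeasureFunction μ)
    (α : ℝ) (hα0 : 0 < α) (hα1 : α ≤ 1)
    (m : ℕ) (hm : 0 < m) (l : Fin m → ℝ) (hl : ∀ j, 1 ≤ l j) (q : ℝ)
    (hlq0 : 0 < (∑ j, 1 / l j)⁻¹ / q)
    (hlq : (∑ j, 1 / l j)⁻¹ / q ≤ α * κ / n)
    (p₀' : ℝ) (hp₀' : ∀ j, l j ≤ p₀')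
    (T : (Fin m → X → ℝ) → X → ℝ)
    (hT : ∃ C : ℝ, 0 < C ∧ ∀ f : Fin m → X → ℝ, (∀ j, Measurable (f j)) →
      weakLpNormW μ q (fun _ => 1) (T f) ≤
        ENNReal.ofReal C * ∏ j, lpNormW μ (l j) (fun _ => 1) (f j))
    (δ : ℝ) (hδ0 : 0 < δ) (hδ : δ < q) :
    ∃ C : ℝ, 0 < C ∧ ∀ (zB : X) (rB : ℝ), 0 < rB → rB < (1 : ℝ) / 4 →
      ∀ x ∈ ball zB rB,
      ∀ f : Fin m → X → ℝ,
        (∀ j, Measurable (f j)) →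
        (∀ j, ∃ M : ℝ, ∀ y, |f j y| ≤ M) →
        (∀ j, IsBounded (Function.support (f j))) →
        ((μ (ball zB rB))⁻¹ *
            ∫⁻ z in ball zB rB,
              ENNReal.ofReal
                (|T (fun j => (ball zB (16 * rB ^ α)).indicator (f j)) z| ^ δ)
                ∂μ) ^ (1 / δ)
          ≤ ENNReal.ofReal (C * rB ^ (α * κ * (∑ j, 1 / l j) - n / q)) *
              multiMaximalPow μ p₀' f x ∧
        ((μ (ball zB rB))⁻¹ *
            ∫⁻ z in ball zB rB,
              ENNReal.ofReal
                (|T (fun j => (ball zB (16 * rB ^ α)).indicator (f j)) z| ^ δ)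
                ∂μ) ^ (1 / δ)
          ≤ ENNReal.ofReal C * multiMaximalPow μ p₀' f x := by
  classical
  obtain ⟨CT, hCT0, hTbound⟩ := hT
  set Sg : ℝ := ∑ j, 1 / l j with hSgdef
  have hSg0 : 0 < Sg := by
    rw [hSgdef]
    refine Finset.sum_pos (fun j _ => by have := hl j; positivity) ⟨⟨0, hm⟩, Finset.mem_univ _⟩
  have hq0 : 0 < q := by
    by_contra hq
    push_neg at hq
    have h1 : Sg⁻¹ / q ≤ 0 := div_nonpos_of_nonneg_of_nonpos (by positivity) hq
    linarith [hlq0]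
  have hκ0 := hRD.kappa_pos
  have hn0 : 0 < n := by
    by_contra hn
    push_neg at hn
    have h1 : α * κ / n ≤ 0 := div_nonpos_of_nonneg_of_nonpos (by positivity) hn
    linarith [hlq0, hlq]
  have hqSg : 1 / q ≤ Sg := by
    have h1 : α * κ / n ≤ 1 := by
      rw [div_le_one hn0]
      nlinarith [hRD.kappa_le_n, hκ0, hα0, hα1]
    have h2 : Sg⁻¹ / q ≤ 1 := le_trans hlq h1
    rw [div_le_one hq0] at h2
    rw [div_le_iff₀ hq0]
    have h3 := mul_le_mul_of_nonneg_left h2 hSg0.le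
    rwa [mul_inv_cancel₀ hSg0.ne'] at h3
  have he0 : 0 ≤ α * κ * Sg - n / q := by
    have h4 : Sg⁻¹ * n ≤ α * κ * q := by rwa [div_le_div_iff₀ hq0 hn0] at hlq
    rw [sub_nonneg, div_le_iff₀ hq0]
    have h5 := mul_le_mul_of_nonneg_left h4 hSg0.le
    rw [← mul_assoc, mul_inv_cancel₀ hSg0.ne', one_mul] at h5
    exact h5.trans_eq (by ring)
  have hp₀'1 : (1:ℝ) ≤ p₀' := le_trans (hl ⟨0, hm⟩) (hp₀' ⟨0, hm⟩)
  have hp₀'0 : (0:ℝ) < p₀' := lt_of_lt_of_le one_pos hp₀'1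
  obtain ⟨K, hK0, hKol⟩ := kolmogorov (X := X) hδ0 hδ hq0
  obtain ⟨D, hD0, hGeom⟩ := geom_bound μ κ n hRD hΦ hn0 α hα0 hα1 q Sg hq0 hSg0 hqSg
  refine ⟨K * CT * D, by positivity, ?_⟩
  intro zB rB hr0 hr14 x hx f hfm _ _
  have hr1 : rB < 1 := by linarith
  have hsα : (0:ℝ) < 16 * rB ^ α := by
    have := Real.rpow_pos_of_pos hr0 α
    positivity
  set B : Set X := ball zB rB with hB
  set B' : Set X := ball zB (16 * rB ^ α) with hB'
  have hB'0 : μ B' ≠ 0 := (hRD.ball_pos zB _ hsα).ne'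
  have hB't : μ B' ≠ ⊤ := (hRD.ball_lt_top zB _ hsα).ne
  have hB0 : 0 < μ B := hRD.ball_pos zB rB hr0
  have hBt : μ B < ⊤ := hRD.ball_lt_top zB rB hr0
  set g : Fin m → X → ℝ := fun j => B'.indicator (f j) with hg
  have hgm : ∀ j, Measurable (g j) := fun j => (hfm j).indicator measurableSet_ball
  have h1 := hKol μ B hB0 hBt (T g)
  have h2 := hTbound g hgm
  -- per-coordinate bound on the L^{l j} norms
  set A : Fin m → ℝ≥0∞ := fun j =>
    (μ B')⁻¹ * ∫⁻ y in B', (ENNReal.ofReal |f j y|) ^ p₀' ∂μ with hA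
  have h3 : ∀ j, lpNormW μ (l j) (fun _ => 1) (g j) ≤
      (μ B') ^ (1 / l j) * (A j) ^ (1 / p₀') := by
    intro j
    have hlj : (0:ℝ) < l j := lt_of_lt_of_le one_pos (hl j)
    have heq : lpNormW μ (l j) (fun _ => 1) (g j)
        = (∫⁻ y in B', (ENNReal.ofReal |f j y|) ^ (l j) ∂μ) ^ (1 / l j) := by
      rw [lpNormW, ← lintegral_indicator measurableSet_ball]
      congr 1
      refine lintegral_congr fun y => ?_
      by_cases hy : y ∈ ball zB (16 * rB ^ α)
      · simp only [hg, hB', Set.indicator_of_mem hy, mul_one]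
        exact (ENNReal.ofReal_rpow_of_nonneg (abs_nonneg _) hlj.le).symm
      · simp [hg, hB', Set.indicator_of_notMem hy, Real.zero_rpow hlj.ne']
    rw [heq]
    exact holder_avg μ B' hB'0 hB't _ ((hfm j).norm.ennreal_ofReal) hlj (hp₀' j)
  have hxB' : x ∈ B' := by
    have hih : rB ≤ rB ^ α := by
      have h6 := Real.rpow_le_rpow_of_exponent_ge hr0 hr1.le hα1
      rwa [Real.rpow_one] at h6
    have h7 : (0:ℝ) < rB ^ α := Real.rpow_pos_of_pos hr0 α
    exact mem_of_mem_of_subset hx (ball_subset_ball (by nlinarith))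
  -- the product bound
  have hMM : ∀ j, A j ≤ (μ B')⁻¹ *
      ∫⁻ y in B', ENNReal.ofReal (|(|f j y| ^ p₀')|) ∂μ := by
    intro j
    refine le_of_eq ?_
    show (μ B')⁻¹ * ∫⁻ y in B', (ENNReal.ofReal |f j y|) ^ p₀' ∂μ = _
    congr 1
    refine lintegral_congr fun y => ?_
    rw [abs_of_nonneg (Real.rpow_nonneg (abs_nonneg _) _),
      ENNReal.ofReal_rpow_of_nonneg (abs_nonneg _) hp₀'0.le]
  have hprod : (∏ j, lpNormW μ (l j) (fun _ => 1) (g j)) ≤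
      (μ B') ^ Sg * multiMaximalPow μ p₀' f x := by
    calc ∏ j, lpNormW μ (l j) (fun _ => 1) (g j)
        ≤ ∏ j, ((μ B') ^ (1 / l j) * (A j) ^ (1 / p₀')) :=
          Finset.prod_le_prod' fun j _ => h3 j
      _ = (∏ j, (μ B') ^ (1 / l j)) * ∏ j, (A j) ^ (1 / p₀') := Finset.prod_mul_distrib
      _ = (μ B') ^ Sg * (∏ j, A j) ^ (1 / p₀') := by
          rw [hSgdef, ennreal_rpow_sum (μ B') hB'0 hB't,
            ← ENNReal.prod_rpow_of_nonneg (by positivity : (0:ℝ) ≤ 1 / p₀')]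
      _ ≤ (μ B') ^ Sg * multiMaximalPow μ p₀' f x := by
          refine mul_le_mul_right ?_ _
          rw [multiMaximalPow]
          refine ENNReal.rpow_le_rpow ?_ (by positivity)
          rw [multiMaximal]
          refine le_iSup_of_le zB (le_iSup_of_le (16 * rB ^ α)
            (le_iSup_of_le hsα (le_iSup_of_le hxB' ?_)))
          exact Finset.prod_le_prod' fun j _ => hMM j
  -- assemble
  set MM := multiMaximalPow μ p₀' f x with hMMdef
  have hmain : ((μ B)⁻¹ * ∫⁻ z in B, ENNReal.ofReal (|T g z| ^ δ) ∂μ) ^ (1/δ) ≤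
      ENNReal.ofReal ((K * CT * D) * rB ^ (α * κ * Sg - n / q)) * MM := by
    calc ((μ B)⁻¹ * ∫⁻ z in B, ENNReal.ofReal (|T g z| ^ δ) ∂μ) ^ (1/δ)
        ≤ ENNReal.ofReal K * weakLpNormW μ q (fun _ => 1) (T g) * (μ B) ^ (-(1/q)) := h1
      _ ≤ ENNReal.ofReal K * (ENNReal.ofReal CT * ((μ B') ^ Sg * MM)) * (μ B) ^ (-(1/q)) := by
          refine mul_le_mul_left (mul_le_mul_right ?_ _) _
          exact h2.trans (mul_le_mul_right hprod _)
      _ = (ENNReal.ofReal K * ENNReal.ofReal CT) * ((μ B) ^ (-(1/q)) * (μ B') ^ Sg) * MM := by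
          ring
      _ ≤ (ENNReal.ofReal K * ENNReal.ofReal CT) *
            ENNReal.ofReal (D * rB ^ (α * κ * Sg - n / q)) * MM := by
          refine mul_le_mul_left (mul_le_mul_right ?_ _) _
          exact hGeom zB rB hr0 hr14
      _ = ENNReal.ofReal ((K * CT * D) * rB ^ (α * κ * Sg - n / q)) * MM := by
          rw [← ENNReal.ofReal_mul hK0.le, ← ENNReal.ofReal_mul (by positivity)]
          congr 2
          ring
  constructor
  · exact hmain
  · refine hmain.trans (mul_le_mul_left (ENNReal.ofReal_le_ofReal ?_) _)
    have hle1 : rB ^ (α * κ * Sg - n / q) ≤ 1 := Real.rpow_le_one hr0.le hr1.le he0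
    have hfin := mul_le_mul_of_nonneg_left hle1 (by positivity : (0:ℝ) ≤ K * CT * D)
    simpa using hfin
end
end
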